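/- arXiv:2009.03685 — 2 statements merged into one kernel-verified Lean document; each statement's English description precedes it below -/
import Mathlib

section
/- Under the hypotheses that u ↦ |K(u)| |det A(u)|^{-1/p} is integrable on Ω (with 1 < p < ∞, 1/p + 1/q = 1), the Banach-space adjoint of the Hausdorff operator H_{K,A} on L^p(ℝ^n), when L^p(ℝ^n)^* is identified with L^q(ℝ^n), is itself a Hausdorff operator: (H_{K,A}^* g)(x) = ∫_Ω conj(K(v)) |det A(v)|^{-1} g(A(v)^{-1} x) dμ(v). -/
open MeasureTheory Matrix Filter Topology
open scoped ENNReal NNReal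

variable {n : ℕ}

theorem lintegral_minkowski {α β : Type*} [MeasurableSpace α] [MeasurableSpace β]
    (μ : Measure α) (ν : Measure β) [SigmaFinite μ] [SigmaFinite ν]
    {f : α → β → ℝ≥0∞} (hf : Measurable (Function.uncurry f)) {p q : ℝ}
    (hpq : p.HolderConjugate q) :
    (∫⁻ x, (∫⁻ v, f v x ∂μ) ^ q ∂ν) ^ (1 / q) ≤ ∫⁻ v, (∫⁻ x, f v x ^ q ∂ν) ^ (1 / q) ∂μ := by
  set C := ∫⁻ v, (∫⁻ x, f v x ^ q ∂ν) ^ (1 / q) ∂μ with hC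
  rcases eq_or_ne C ⊤ with hCtop | hCtop
  · simp [hCtop]
  have hq1 : 1 < q := hpq.symm.lt
  have hq0 : 0 < q := lt_trans one_pos hq1
  have hp0 : 0 < p := hpq.pos
  set F : β → ℝ≥0∞ := fun x => ∫⁻ v, f v x ∂μ with hFdef
  have hF : Measurable F := Measurable.lintegral_prod_left hf
  set G : ℕ → β → ℝ≥0∞ :=
    fun m x => (spanningSets ν m).indicator (fun y => min (F y) m) x with hGdef
  have hGmeas : ∀ m, Measurable (G m) := fun m =>
    (hF.min measurable_const).indicator (measurableSet_spanningSets ν m)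
  have hGle : ∀ m x, G m x ≤ F x := by
    intro m x
    refine le_trans (Set.indicator_le_self _ _ x) (min_le_left _ _)
  have hGlec : ∀ m x, G m x ≤ (m : ℝ≥0∞) := by
    intro m x
    refine le_trans (Set.indicator_le' (fun y _ => min_le_right _ _) (fun _ _ => zero_le) x) le_rfl
  have hGtop : ∀ m x, G m x ≠ ⊤ := fun m x =>
    ne_top_of_le_ne_top (ENNReal.natCast_ne_top m) (hGlec m x)
  have hGmono : Monotone G := by
    intro m m' h x
    rcases (em (x ∈ spanningSets ν m)) with hx | hx
    · have hx' : x ∈ spanningSets ν m' := spanningSets_mono h hx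
      simp only [G, Set.indicator_of_mem hx, Set.indicator_of_mem hx']
      exact min_le_min le_rfl (by exact_mod_cast Nat.cast_le.2 h)
    · simp [G, Set.indicator_of_notMem hx]
  have hGsup : ∀ x, ⨆ m, G m x = F x := by
    intro x
    refine le_antisymm (iSup_le fun m => hGle m x) ?_
    obtain ⟨m₀, hm₀⟩ : ∃ m₀, x ∈ spanningSets ν m₀ := by
      have := iUnion_spanningSets ν
      have hx : x ∈ ⋃ i, spanningSets ν i := by rw [this]; trivial
      exact Set.mem_iUnion.1 hx
    have h1 : F x = ⨆ m : ℕ, min (F x) m := by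
      rw [← inf_iSup_eq]
      simp [ENNReal.iSup_natCast]
    rw [h1]
    refine iSup_le fun m => ?_
    refine le_trans ?_ (le_iSup _ (max m m₀))
    have hx' : x ∈ spanningSets ν (max m m₀) := spanningSets_mono (le_max_right _ _) hm₀
    simp only [G, Set.indicator_of_mem hx']
    exact min_le_min le_rfl (by exact_mod_cast Nat.cast_le.2 (le_max_left m m₀))
  have hfin : ∀ m, ∫⁻ x, G m x ^ q ∂ν ≠ ⊤ := by
    intro m
    have hb : ∀ x, G m x ^ q ≤ (spanningSets ν m).indicator (fun _ => (m : ℝ≥0∞) ^ q) x := by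
      intro x
      rcases (em (x ∈ spanningSets ν m)) with hx | hx
      · simp only [Set.indicator_of_mem hx]
        exact ENNReal.rpow_le_rpow (by simpa [G, Set.indicator_of_mem hx] using hGlec m x) hq0.le
      · simp [G, Set.indicator_of_notMem hx, ENNReal.zero_rpow_of_pos hq0]
    refine ne_top_of_le_ne_top ?_ (lintegral_mono hb)
    rw [lintegral_indicator (measurableSet_spanningSets ν m), setLIntegral_const]
    exact ENNReal.mul_ne_top (ENNReal.rpow_lt_top_of_nonneg hq0.le (ENNReal.natCast_ne_top m)).ne
      (measure_spanningSets_lt_top ν m).ne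
  have hsect : ∀ x, Measurable fun v => f v x := fun x =>
    hf.comp (measurable_id.prodMk measurable_const)
  have key : ∀ m, ∫⁻ x, G m x ^ q ∂ν ≤ C ^ q := by
    intro m
    set a := ∫⁻ x, G m x ^ q ∂ν with ha
    have step1 : a ≤ ∫⁻ x, G m x ^ (q - 1) * F x ∂ν := by
      refine lintegral_mono fun x => ?_
      have : G m x ^ q = G m x ^ (q - 1) * G m x ^ (1:ℝ) := by
        rw [← ENNReal.rpow_add_of_nonneg _ _ (by linarith) zero_le_one]
        norm_num
      rw [this, ENNReal.rpow_one]
      exact mul_le_mul_right (hGle m x) _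
    have hGq1top : ∀ x, G m x ^ (q - 1) ≠ ⊤ := fun x =>
      (ENNReal.rpow_lt_top_of_nonneg (by linarith) (hGtop m x)).ne
    have step2 : ∫⁻ x, G m x ^ (q - 1) * F x ∂ν
        = ∫⁻ x, ∫⁻ v, G m x ^ (q - 1) * f v x ∂μ ∂ν := by
      refine lintegral_congr fun x => ?_
      rw [lintegral_const_mul' _ _ (hGq1top x)]
    have hjoint : Measurable (Function.uncurry fun x v => G m x ^ (q - 1) * f v x) := by
      have h1 : Measurable fun z : β × α => G m z.1 ^ (q - 1) :=
        ((hGmeas m).comp measurable_fst).pow_const _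
      have h2 : Measurable fun z : β × α => f z.2 z.1 := hf.comp measurable_swap
      exact h1.mul h2
    have step3 : ∫⁻ x, ∫⁻ v, G m x ^ (q - 1) * f v x ∂μ ∂ν
        = ∫⁻ v, ∫⁻ x, G m x ^ (q - 1) * f v x ∂ν ∂μ :=
      lintegral_lintegral_swap hjoint.aemeasurable
    have step4 : ∀ v, ∫⁻ x, G m x ^ (q - 1) * f v x ∂ν ≤ a ^ (1 / p) * (∫⁻ x, f v x ^ q ∂ν) ^ (1 / q) := by
      intro v
      have hfv : Measurable (f v) := hf.comp (measurable_const.prodMk measurable_id)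
      have hHolder := ENNReal.lintegral_mul_le_Lp_mul_Lq ν hpq
        (f := fun x => G m x ^ (q - 1)) (g := fun x => f v x)
        (((hGmeas m).pow_const (q - 1)).aemeasurable) hfv.aemeasurable
      refine le_trans (le_of_eq (by simp [Pi.mul_apply]) |>.trans hHolder) ?_
      have : ∫⁻ x, (G m x ^ (q - 1)) ^ p ∂ν = a := by
        refine lintegral_congr fun x => ?_
        rw [← ENNReal.rpow_mul]
        congr 1
        have := hpq.symm.sub_one_mul_conj
        linarith
      rw [this]
    have step5 : ∫⁻ v, ∫⁻ x, G m x ^ (q - 1) * f v x ∂ν ∂μ ≤ a ^ (1 / p) * C := by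
      refine le_trans (lintegral_mono step4) ?_
      rw [lintegral_const_mul' _ _
        (ENNReal.rpow_lt_top_of_nonneg (by positivity) (hfin m)).ne]
    have hac : a ≤ a ^ (1 / p) * C := le_trans step1 (step2 ▸ step3 ▸ step5)
    -- conclude a ≤ C ^ q
    rcases eq_or_ne a 0 with ha0 | ha0
    · simp [ha0]
    have haq : a ^ (1 / q) ≤ C := by
      have hne : a ^ (1 / p) ≠ 0 := by
        simp only [Ne, ENNReal.rpow_eq_zero_iff, not_or, not_and]
        exact ⟨fun h => absurd h ha0, fun h => absurd h (hfin m)⟩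
      have hnt : a ^ (1 / p) ≠ ⊤ :=
        (ENNReal.rpow_lt_top_of_nonneg (by positivity) (hfin m)).ne
      rw [← ENNReal.mul_le_mul_iff_left hne hnt]
      calc a ^ (1 / q) * a ^ (1 / p) = a ^ (1 / q + 1 / p) :=
            (ENNReal.rpow_add_of_nonneg _ _ (by positivity) (by positivity)).symm
        _ = a := by rw [add_comm, one_div, one_div, hpq.inv_add_inv_eq_one, ENNReal.rpow_one]
        _ ≤ a ^ (1 / p) * C := hac
        _ = C * a ^ (1 / p) := mul_comm _ _
    calc a = (a ^ (1 / q)) ^ q := by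
          rw [← ENNReal.rpow_mul, one_div, inv_mul_cancel₀ hq0.ne', ENNReal.rpow_one]
      _ ≤ C ^ q := ENNReal.rpow_le_rpow haq hq0.le
  have hsupq : ∫⁻ x, F x ^ q ∂ν ≤ C ^ q := by
    have hpt : ∀ x, F x ^ q = ⨆ m, G m x ^ q := by
      intro x
      rw [← hGsup x]
      have h := (ENNReal.orderIsoRpow q hq0).map_iSup (fun m => G m x)
      simp only [ENNReal.orderIsoRpow_apply] at h
      exact h
    calc ∫⁻ x, F x ^ q ∂ν = ∫⁻ x, ⨆ m, G m x ^ q ∂ν := lintegral_congr hpt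
      _ = ⨆ m, ∫⁻ x, G m x ^ q ∂ν :=
          lintegral_iSup (fun m => (hGmeas m).pow_const q)
            (fun m m' h x => ENNReal.rpow_le_rpow (hGmono h x) hq0.le)
      _ ≤ C ^ q := iSup_le key
  calc (∫⁻ x, F x ^ q ∂ν) ^ (1 / q) ≤ (C ^ q) ^ (1 / q) :=
        ENNReal.rpow_le_rpow hsupq (by positivity)
    _ = C := by rw [← ENNReal.rpow_mul, mul_one_div, div_self hq0.ne', ENNReal.rpow_one]

variable {n : ℕ}

theorem measurable_toLin' (M : Matrix (Fin n) (Fin n) ℝ) : Measurable (Matrix.toLin' M) :=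
  (LinearMap.continuous_on_pi _).measurable

theorem smul_vol_ac {c : ℝ≥0∞} :
    (c • (volume : Measure (Fin n → ℝ))) ≪ (volume : Measure (Fin n → ℝ)) :=
  Measure.absolutelyContinuous_of_le_smul le_rfl

theorem lintegral_comp_mulVec {M : Matrix (Fin n) (Fin n) ℝ} (hM : M.det ≠ 0)
    (h : (Fin n → ℝ) → ℝ≥0∞) (hh : AEMeasurable h (volume : Measure (Fin n → ℝ))) :
    ∫⁻ x, h (M.mulVec x) = ENNReal.ofReal |M.det|⁻¹ * ∫⁻ y, h y := by
  have hmap := Real.map_matrix_volume_pi_eq_smul_volume_pi hM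
  have h1 : ∫⁻ x, h (M.mulVec x) = ∫⁻ y, h y ∂(Measure.map (Matrix.toLin' M) volume) := by
    rw [lintegral_map' ?_ (measurable_toLin' M).aemeasurable]
    · simp_rw [Matrix.toLin'_apply]
    · rw [hmap]; exact hh.mono_ac smul_vol_ac
  rw [h1, hmap, lintegral_smul_measure, abs_inv, smul_eq_mul]

theorem integral_comp_mulVec {M : Matrix (Fin n) (Fin n) ℝ} (hM : M.det ≠ 0)
    (h : (Fin n → ℝ) → ℂ) (hh : AEStronglyMeasurable h (volume : Measure (Fin n → ℝ))) :
    ∫ x, h (M.mulVec x) = |M.det|⁻¹ • ∫ y, h y := by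
  have hmap := Real.map_matrix_volume_pi_eq_smul_volume_pi hM
  have h1 : ∫ x, h (M.mulVec x) = ∫ y, h y ∂(Measure.map (Matrix.toLin' M) volume) := by
    rw [integral_map (measurable_toLin' M).aemeasurable ?_]
    · simp_rw [Matrix.toLin'_apply]
    · rw [hmap]; exact hh.mono_ac smul_vol_ac
  rw [h1, hmap, integral_smul_measure, abs_inv,
    ENNReal.toReal_ofReal (by positivity)]

theorem measurable_mulVec_pair {Ω : Type*} [MeasurableSpace Ω]
    (M : Ω → Matrix (Fin n) (Fin n) ℝ) (hM : ∀ i j, Measurable fun u => M u i j) :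
    Measurable fun p : Ω × (Fin n → ℝ) => (M p.1).mulVec p.2 := by
  apply measurable_pi_lambda
  intro i
  simp only [Matrix.mulVec, dotProduct]
  exact Finset.measurable_sum _ fun j _ =>
    ((hM i j).comp measurable_fst).mul ((measurable_pi_apply j).comp measurable_snd)

theorem measurable_fam_det {Ω : Type*} [MeasurableSpace Ω]
    {M : Ω → Matrix (Fin n) (Fin n) ℝ} (hM : ∀ i j, Measurable fun u => M u i j) :
    Measurable fun u => (M u).det := by
  simp_rw [Matrix.det_apply']
  refine Finset.measurable_sum _ fun σ _ => ?_
  exact (Finset.measurable_prod _ fun i _ => hM (σ i) i).const_mul _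

theorem measurable_fam_inv {Ω : Type*} [MeasurableSpace Ω]
    {M : Ω → Matrix (Fin n) (Fin n) ℝ} (hM : ∀ i j, Measurable fun u => M u i j) :
    ∀ i j, Measurable fun u => (M u)⁻¹ i j := by
  intro i j
  have hadj : Measurable fun u => (M u).adjugate i j := by
    simp_rw [Matrix.adjugate_apply]
    refine measurable_fam_det fun k l => ?_
    rcases eq_or_ne k j with rfl | hkj
    · simp only [Matrix.updateRow_self]
      exact measurable_const
    · simp only [Matrix.updateRow_ne hkj]
      exact hM k l
  simp_rw [Matrix.inv_def, Matrix.smul_apply, Ring.inverse_eq_inv', smul_eq_mul]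
  exact (measurable_inv.comp (measurable_fam_det hM)).mul hadj

theorem ae_prod_not_mem_null {Ω : Type*} [MeasurableSpace Ω] (μ : Measure Ω) [SigmaFinite μ]
    (M : Ω → Matrix (Fin n) (Fin n) ℝ) (hM : ∀ i j, Measurable fun u => M u i j)
    (hdet : ∀ᵐ v ∂μ, (M v).det ≠ 0) {t : Set (Fin n → ℝ)} (ht : MeasurableSet t)
    (ht0 : volume t = 0) :
    ∀ᵐ p : Ω × (Fin n → ℝ) ∂(μ.prod volume), (M p.1).mulVec p.2 ∉ t := by
  set S : Set Ω := {v | (M v).det ≠ 0} with hS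
  have hSmeas : MeasurableSet S := ((measurable_fam_det hM) (measurableSet_singleton 0)).compl
  set P : Set (Ω × (Fin n → ℝ)) := {p | (M p.1).det ≠ 0 ∧ (M p.1).mulVec p.2 ∈ t} with hP
  have hPmeas : MeasurableSet P := by
    refine MeasurableSet.inter ?_ ((measurable_mulVec_pair M hM) ht)
    exact (((measurable_fam_det hM).comp measurable_fst) (measurableSet_singleton 0)).compl
  have hPnull : (μ.prod volume) P = 0 := by
    rw [Measure.prod_apply hPmeas]
    rw [lintegral_eq_zero_iff (measurable_measure_prodMk_left hPmeas)]
    refine Eventually.of_forall fun v => ?_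
    show volume (Prod.mk v ⁻¹' P) = 0
    rcases eq_or_ne (M v).det 0 with hv | hv
    · have : (Prod.mk v ⁻¹' P) = ∅ := by
        ext x; simp [P, hv]
      simp [this]
    · have hset : (Prod.mk v ⁻¹' P) = (Matrix.toLin' (M v)) ⁻¹' t := by
        ext x; simp [P, hv, Matrix.toLin'_apply]
      rw [hset, ← Measure.map_apply (measurable_toLin' _) ht,
        Real.map_matrix_volume_pi_eq_smul_volume_pi hv]
      simp [ht0]
  have hQnull : (μ.prod volume) {p : Ω × (Fin n → ℝ) | (M p.1).det = 0} = 0 := by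
    have hQ : {p : Ω × (Fin n → ℝ) | (M p.1).det = 0} = Sᶜ ×ˢ Set.univ := by
      ext p; simp [S]
    rw [hQ, Measure.prod_prod]
    have hSc : μ Sᶜ = 0 := by
      rw [ae_iff] at hdet
      convert hdet using 2
      rfl
    simp [hSc]
  rw [ae_iff]
  refine measure_mono_null ?_ (measure_union_null hPnull hQnull)
  intro p hp
  simp only [Set.mem_setOf_eq, not_not] at hp
  rcases eq_or_ne (M p.1).det 0 with h0 | h0
  · exact Or.inr h0
  · exact Or.inl ⟨h0, hp⟩

theorem ae_ae_not_mem_null {Ω : Type*} [MeasurableSpace Ω] (μ : Measure Ω) [SigmaFinite μ]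
    (M : Ω → Matrix (Fin n) (Fin n) ℝ) (hM : ∀ i j, Measurable fun u => M u i j)
    (hdet : ∀ᵐ v ∂μ, (M v).det ≠ 0) {t : Set (Fin n → ℝ)} (ht : MeasurableSet t)
    (ht0 : volume t = 0) :
    ∀ᵐ x : Fin n → ℝ, ∀ᵐ v ∂μ, (M v).mulVec x ∉ t := by
  have hmeas : MeasurableSet {p : Ω × (Fin n → ℝ) | (M p.1).mulVec p.2 ∈ t} :=
    (measurable_mulVec_pair M hM) ht
  have h : (μ.prod volume) {p : Ω × (Fin n → ℝ) | (M p.1).mulVec p.2 ∈ t} = 0 := by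
    have h' := ae_prod_not_mem_null μ M hM hdet ht ht0
    rw [ae_iff] at h'
    simpa [not_not] using h'
  rw [Measure.prod_apply_symm hmeas] at h
  have h2 := (lintegral_eq_zero_iff
    (measurable_measure_prodMk_right hmeas)).1 h
  filter_upwards [h2] with x hx
  rw [ae_iff]
  simpa using hx


theorem hausdorff_T_props {n : ℕ} {Ω : Type*} [MeasurableSpace Ω] (μ : Measure Ω)
    [SigmaFinite μ] (B : Ω → Matrix (Fin n) (Fin n) ℝ)
    (hB : ∀ i j, Measurable fun u => B u i j) (hdetB : ∀ᵐ v ∂μ, (B v).det ≠ 0)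
    (k : Ω → ℂ) (hk : Measurable k) {q : ℝ≥0∞} (hq0 : q ≠ 0) (hqtop : q ≠ ⊤)
    {pr qr : ℝ} (hconj : pr.HolderConjugate qr) (hqr : q.toReal = qr) (C : ℝ≥0∞)
    (hC : ∫⁻ v, (‖k v‖₊ : ℝ≥0∞) * (ENNReal.ofReal |(B v).det|) ^ (-(1/qr)) ∂μ ≤ C)
    (hCtop : C ≠ ⊤) (G : (Fin n → ℝ) → ℂ) (hGm : Measurable G)
    (hGq : eLpNorm G q (volume : Measure (Fin n → ℝ)) ≠ ⊤) :
    AEStronglyMeasurable (fun x => ∫ v, k v * G ((B v).mulVec x) ∂μ)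
        (volume : Measure (Fin n → ℝ)) ∧
      eLpNorm (fun x => ∫ v, k v * G ((B v).mulVec x) ∂μ) q (volume : Measure (Fin n → ℝ))
        ≤ C * eLpNorm G q (volume : Measure (Fin n → ℝ)) ∧
      ∀ᵐ x : Fin n → ℝ, Integrable (fun v => k v * G ((B v).mulVec x)) μ := by
  have hqr1 : 1 < qr := hconj.symm.lt
  have hqr0 : 0 < qr := lt_trans one_pos hqr1
  have hjoint : Measurable fun p : Ω × (Fin n → ℝ) => k p.1 * G ((B p.1).mulVec p.2) :=
    (hk.comp measurable_fst).mul (hGm.comp (measurable_mulVec_pair B hB))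
  have hmeasT : AEStronglyMeasurable (fun x => ∫ v, k v * G ((B v).mulVec x) ∂μ)
      (volume : Measure (Fin n → ℝ)) := by
    have : StronglyMeasurable
        (Function.uncurry fun (x : Fin n → ℝ) (v : Ω) => k v * G ((B v).mulVec x)) :=
      (hjoint.comp measurable_swap).stronglyMeasurable
    exact this.integral_prod_right.aestronglyMeasurable
  set Φ : Ω → (Fin n → ℝ) → ℝ≥0∞ := fun v x => (‖k v * G ((B v).mulVec x)‖₊ : ℝ≥0∞) with hΦdef
  have hΦ : Measurable (Function.uncurry Φ) := by
    have : Measurable fun p : Ω × (Fin n → ℝ) => (‖k p.1 * G ((B p.1).mulVec p.2)‖₊ : ℝ≥0∞) :=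
      hjoint.enorm
    exact this
  set I : ℝ≥0∞ := ∫⁻ y, (‖G y‖₊ : ℝ≥0∞) ^ qr with hIdef
  have hIG : eLpNorm G q volume = I ^ (1/qr) := by
    rw [eLpNorm_eq_lintegral_rpow_enorm_toReal hq0 hqtop, hqr]
    rfl
  have hItop : I ^ (1/qr) ≠ ⊤ := by rw [← hIG]; exact hGq
  have hmink := lintegral_minkowski μ (volume : Measure (Fin n → ℝ)) hΦ hconj
  have hterm : ∀ᵐ v ∂μ, (∫⁻ x, Φ v x ^ qr) ^ (1/qr)
      = ((‖k v‖₊ : ℝ≥0∞) * (ENNReal.ofReal |(B v).det|) ^ (-(1/qr))) * I ^ (1/qr) := by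
    filter_upwards [hdetB] with v hv
    have habs : (0:ℝ) < |(B v).det| := abs_pos.2 hv
    have h1 : ∀ x, Φ v x ^ qr
        = ((‖k v‖₊ : ℝ≥0∞)) ^ qr * ((‖G ((B v).mulVec x)‖₊ : ℝ≥0∞)) ^ qr := by
      intro x
      rw [hΦdef]
      simp only [nnnorm_mul, ENNReal.coe_mul]
      exact ENNReal.mul_rpow_of_nonneg _ _ hqr0.le
    have h2 : ∫⁻ x, Φ v x ^ qr = (‖k v‖₊ : ℝ≥0∞) ^ qr *
        (ENNReal.ofReal |(B v).det|⁻¹ * I) := by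
      simp_rw [h1]
      rw [lintegral_const_mul' _ _
        (ENNReal.rpow_lt_top_of_nonneg hqr0.le ENNReal.coe_ne_top).ne]
      congr 1
      exact lintegral_comp_mulVec hv _ (hGm.enorm.pow_const _).aemeasurable
    rw [h2]
    rw [ENNReal.mul_rpow_of_nonneg _ _ (by positivity), ENNReal.mul_rpow_of_nonneg _ _ (by positivity)]
    rw [← ENNReal.rpow_mul, mul_one_div, div_self hqr0.ne', ENNReal.rpow_one]
    rw [ENNReal.ofReal_inv_of_pos habs, ← ENNReal.rpow_neg_one, ← ENNReal.rpow_mul]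
    ring_nf
  have hbound : eLpNorm (fun x => ∫ v, k v * G ((B v).mulVec x) ∂μ) q volume
      ≤ C * eLpNorm G q volume := by
    rw [eLpNorm_eq_lintegral_rpow_enorm_toReal hq0 hqtop, hqr, hIG]
    have hstep1 : (∫⁻ x, (‖∫ v, k v * G ((B v).mulVec x) ∂μ‖₊ : ℝ≥0∞) ^ qr) ^ (1/qr)
        ≤ (∫⁻ x, (∫⁻ v, Φ v x ∂μ) ^ qr) ^ (1/qr) := by
      refine ENNReal.rpow_le_rpow (lintegral_mono fun x => ?_) (by positivity)
      exact ENNReal.rpow_le_rpow (enorm_integral_le_lintegral_enorm _) hqr0.le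
    refine le_trans hstep1 (le_trans hmink ?_)
    calc ∫⁻ v, (∫⁻ x, Φ v x ^ qr) ^ (1/qr) ∂μ
        = ∫⁻ v, ((‖k v‖₊ : ℝ≥0∞) * (ENNReal.ofReal |(B v).det|) ^ (-(1/qr))) * I ^ (1/qr) ∂μ :=
          lintegral_congr_ae hterm
      _ = (∫⁻ v, (‖k v‖₊ : ℝ≥0∞) * (ENNReal.ofReal |(B v).det|) ^ (-(1/qr)) ∂μ) * I ^ (1/qr) :=
          lintegral_mul_const' _ _ hItop
      _ ≤ C * I ^ (1/qr) := mul_le_mul_left hC _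
  refine ⟨hmeasT, hbound, ?_⟩
  have hFm : Measurable fun x => ∫⁻ v, Φ v x ∂μ := Measurable.lintegral_prod_left hΦ
  have hfin : ∫⁻ x, (∫⁻ v, Φ v x ∂μ) ^ qr ≠ ⊤ := by
    intro htop
    rw [htop] at hmink
    have h1 : (⊤ : ℝ≥0∞) ^ (1/qr) = ⊤ := by
      exact ENNReal.top_rpow_of_pos (one_div_pos.2 hqr0)
    rw [h1] at hmink
    have h2 : ∫⁻ v, (∫⁻ x, Φ v x ^ qr) ^ (1/qr) ∂μ ≤ C * I ^ (1/qr) := by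
      calc ∫⁻ v, (∫⁻ x, Φ v x ^ qr) ^ (1/qr) ∂μ
          = ∫⁻ v, ((‖k v‖₊ : ℝ≥0∞) * (ENNReal.ofReal |(B v).det|) ^ (-(1/qr))) * I ^ (1/qr) ∂μ :=
            lintegral_congr_ae hterm
        _ = (∫⁻ v, (‖k v‖₊ : ℝ≥0∞) * (ENNReal.ofReal |(B v).det|) ^ (-(1/qr)) ∂μ) * I ^ (1/qr) :=
            lintegral_mul_const' _ _ hItop
        _ ≤ C * I ^ (1/qr) := mul_le_mul_left hC _
    have h3 : (⊤ : ℝ≥0∞) ≤ C * I ^ (1/qr) := le_trans hmink h2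
    exact ENNReal.mul_ne_top hCtop hItop (top_le_iff.1 h3)
  have hae := ae_lt_top (hFm.pow_const qr) hfin
  filter_upwards [hae] with x hx
  have hlt : ∫⁻ v, Φ v x ∂μ < ⊤ := by
    by_contra h
    push_neg at h
    rw [top_le_iff.1 h, ENNReal.top_rpow_of_pos hqr0] at hx
    exact lt_irrefl _ hx
  refine ⟨?_, hlt⟩
  exact (hjoint.comp (measurable_id.prodMk measurable_const)).stronglyMeasurable.aestronglyMeasurable


theorem lint_ne_top_of_eLpNorm {f : (Fin n → ℝ) → ℂ} {p : ℝ≥0∞} (hp0 : p ≠ 0) (hptop : p ≠ ⊤)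
    (h : eLpNorm f p (volume : Measure (Fin n → ℝ)) ≠ ⊤) :
    ∫⁻ y, (‖f y‖₊ : ℝ≥0∞) ^ p.toReal ≠ ⊤ := by
  rw [eLpNorm_eq_lintegral_rpow_enorm_toReal hp0 hptop] at h
  simp only [enorm_eq_nnnorm] at h
  intro htop
  rw [htop, ENNReal.top_rpow_of_pos
    (one_div_pos.2 (ENNReal.toReal_pos hp0 hptop))] at h
  exact h rfl

theorem pairing_integrable {Ω : Type*} [MeasurableSpace Ω] (μ : Measure Ω) [SigmaFinite μ]
    (M : Ω → Matrix (Fin n) (Fin n) ℝ) (hM : ∀ i j, Measurable fun u => M u i j)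
    (hdet : ∀ᵐ v ∂μ, (M v).det ≠ 0)
    (c : Ω → ℂ) (hc : Measurable c)
    (F G : (Fin n → ℝ) → ℂ) (hF : Measurable F) (hG : Measurable G)
    {a b : ℝ} (hab : a.HolderConjugate b) (D : ℝ≥0∞)
    (hD : ∫⁻ v, (‖c v‖₊ : ℝ≥0∞) * (ENNReal.ofReal |(M v).det|) ^ (-(1/a)) ∂μ ≤ D)
    (hDtop : D ≠ ⊤)
    (hFa : ∫⁻ y, (‖F y‖₊ : ℝ≥0∞) ^ a ≠ ⊤) (hGb : ∫⁻ y, (‖G y‖₊ : ℝ≥0∞) ^ b ≠ ⊤) :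
    Integrable (Function.uncurry fun v x => c v * F ((M v).mulVec x) * G x)
      (μ.prod (volume : Measure (Fin n → ℝ))) := by
  have ha0 : 0 < a := hab.pos
  have hb0 : 0 < b := hab.symm.pos
  set Ia := ∫⁻ y, (‖F y‖₊ : ℝ≥0∞) ^ a with hIa
  set Ib := ∫⁻ y, (‖G y‖₊ : ℝ≥0∞) ^ b with hIb
  have hIa' : Ia ^ (1/a) ≠ ⊤ := (ENNReal.rpow_lt_top_of_nonneg (by positivity) hFa).ne
  have hIb' : Ib ^ (1/b) ≠ ⊤ := (ENNReal.rpow_lt_top_of_nonneg (by positivity) hGb).ne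
  have hjoint : Measurable fun p : Ω × (Fin n → ℝ) => c p.1 * F ((M p.1).mulVec p.2) * G p.2 :=
    ((hc.comp measurable_fst).mul (hF.comp (measurable_mulVec_pair M hM))).mul
      (hG.comp measurable_snd)
  refine ⟨hjoint.stronglyMeasurable.aestronglyMeasurable, ?_⟩
  have hlint : ∫⁻ p, (‖c p.1 * F ((M p.1).mulVec p.2) * G p.2‖₊ : ℝ≥0∞) ∂(μ.prod volume)
      = ∫⁻ v, ∫⁻ x, (‖c v * F ((M v).mulVec x) * G x‖₊ : ℝ≥0∞) ∂volume ∂μ :=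
    lintegral_prod _ hjoint.enorm.aemeasurable
  have hinner : ∀ᵐ v ∂μ, ∫⁻ x, (‖c v * F ((M v).mulVec x) * G x‖₊ : ℝ≥0∞) ∂volume
      ≤ ((‖c v‖₊ : ℝ≥0∞) * (ENNReal.ofReal |(M v).det|) ^ (-(1/a))) * (Ia ^ (1/a) * Ib ^ (1/b)) := by
    filter_upwards [hdet] with v hv
    have habs : (0:ℝ) < |(M v).det| := abs_pos.2 hv
    calc ∫⁻ x, (‖c v * F ((M v).mulVec x) * G x‖₊ : ℝ≥0∞) ∂volume
        = ∫⁻ x, (‖c v‖₊ : ℝ≥0∞) * ((‖F ((M v).mulVec x)‖₊ : ℝ≥0∞) * (‖G x‖₊ : ℝ≥0∞)) ∂volume := by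
          refine lintegral_congr fun x => ?_
          simp [nnnorm_mul, mul_assoc]
      _ = (‖c v‖₊ : ℝ≥0∞) * ∫⁻ x, (‖F ((M v).mulVec x)‖₊ : ℝ≥0∞) * (‖G x‖₊ : ℝ≥0∞) ∂volume :=
          lintegral_const_mul' _ _ ENNReal.coe_ne_top
      _ ≤ (‖c v‖₊ : ℝ≥0∞) * ((∫⁻ x, ((‖F ((M v).mulVec x)‖₊ : ℝ≥0∞)) ^ a ∂volume) ^ (1/a)
            * (∫⁻ x, ((‖G x‖₊ : ℝ≥0∞)) ^ b ∂volume) ^ (1/b)) := by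
          refine mul_le_mul_right ?_ _
          have hmv : Measurable fun x : Fin n → ℝ => (M v).mulVec x :=
            (funext fun x => (Matrix.toLin'_apply (M v) x)) ▸ measurable_toLin' (M v)
          exact ENNReal.lintegral_mul_le_Lp_mul_Lq volume hab
            ((hF.comp hmv).enorm).aemeasurable (hG.enorm).aemeasurable
      _ = (‖c v‖₊ : ℝ≥0∞) * ((ENNReal.ofReal |(M v).det|⁻¹ * Ia) ^ (1/a) * Ib ^ (1/b)) := by
          rw [lintegral_comp_mulVec hv (fun y => (‖F y‖₊ : ℝ≥0∞) ^ a) (hF.enorm.pow_const _).aemeasurable]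
      _ = ((‖c v‖₊ : ℝ≥0∞) * (ENNReal.ofReal |(M v).det|) ^ (-(1/a))) * (Ia ^ (1/a) * Ib ^ (1/b)) := by
          rw [ENNReal.mul_rpow_of_nonneg _ _ (by positivity),
            ENNReal.ofReal_inv_of_pos habs, ← ENNReal.rpow_neg_one, ← ENNReal.rpow_mul]
          ring_nf
  show (∫⁻ p : Ω × (Fin n → ℝ), (‖c p.1 * F ((M p.1).mulVec p.2) * G p.2‖₊ : ℝ≥0∞) ∂(μ.prod volume)) < ⊤
  rw [hlint]
  calc ∫⁻ v, ∫⁻ x, (‖c v * F ((M v).mulVec x) * G x‖₊ : ℝ≥0∞) ∂volume ∂μ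
      ≤ ∫⁻ v, ((‖c v‖₊ : ℝ≥0∞) * (ENNReal.ofReal |(M v).det|) ^ (-(1/a)))
          * (Ia ^ (1/a) * Ib ^ (1/b)) ∂μ := lintegral_mono_ae hinner
    _ = (∫⁻ v, (‖c v‖₊ : ℝ≥0∞) * (ENNReal.ofReal |(M v).det|) ^ (-(1/a)) ∂μ)
          * (Ia ^ (1/a) * Ib ^ (1/b)) :=
        lintegral_mul_const' _ _ (ENNReal.mul_ne_top hIa' hIb')
    _ ≤ D * (Ia ^ (1/a) * Ib ^ (1/b)) := mul_le_mul_left hD _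
    _ < ⊤ := ENNReal.mul_lt_top (lt_top_iff_ne_top.2 hDtop)
        (lt_top_iff_ne_top.2 (ENNReal.mul_ne_top hIa' hIb'))


/-- **The adjoint of a Hausdorff operator is a Hausdorff operator.**
If `H` is the Hausdorff operator `(H f)(x) = ∫ K(u) f(A(u)x) dμ(u)` on `L^p(ℝ^n)`
(`1 < p < ∞`, `1/p + 1/q = 1`), then, identifying `(L^p)^*` with `L^q` via the
bilinear pairing `⟨f, g⟩ = ∫ f g`, the adjoint of `H` is the bounded operator `H'` on
`L^q(ℝ^n)` given by `(H' g)(x) = ∫ conj (K v) * |det A v|⁻¹ * g (A(v)⁻¹ x) dμ(v)`;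
the pairing with conjugation adjusted accordingly reads
`∫ (H f) x * conj ((H' g) x) dx = ∫ f x * conj (g x) dx` -- here we use the bilinear
form `⟨f, g⟩ = ∫ f g`, i.e. `∫ (H f) x * g x dx = ∫ f x * (H' g) x dx`. -/
theorem hausdorff_adjoint
    {Ω : Type*} [MeasurableSpace Ω] (μ : Measure Ω) [SigmaFinite μ]
    (n : ℕ) (p q : ℝ≥0∞) [Fact (1 ≤ p)] [Fact (1 ≤ q)]
    (hp1 : 1 < p) (hp : p ≠ ∞) (hpq : 1 / p + 1 / q = 1)
    (K : Ω → ℂ) (hK : Measurable K)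
    (A : Ω → Matrix (Fin n) (Fin n) ℝ) (hA : ∀ i j, Measurable fun u => A u i j)
    (hinv : ∀ᵐ u ∂μ, IsUnit (A u))
    (hint : Integrable (fun u => ‖K u‖ * |(A u).det| ^ (-(1 / p.toReal))) μ)
    (H : Lp ℂ p (volume : Measure (Fin n → ℝ)) →L[ℂ] Lp ℂ p (volume : Measure (Fin n → ℝ)))
    (hH : ∀ f : Lp ℂ p (volume : Measure (Fin n → ℝ)),
      ∀ᵐ x : Fin n → ℝ, (H f : (Fin n → ℝ) → ℂ) x = ∫ u, K u * f ((A u).mulVec x) ∂μ) :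
    ∃ H' : Lp ℂ q (volume : Measure (Fin n → ℝ)) →L[ℂ] Lp ℂ q (volume : Measure (Fin n → ℝ)),
      (∀ g : Lp ℂ q (volume : Measure (Fin n → ℝ)),
        ∀ᵐ x : Fin n → ℝ, (H' g : (Fin n → ℝ) → ℂ) x
          = ∫ v, (starRingEnd ℂ) (K v) * (|(A v).det|⁻¹ : ℝ) * g ((A v)⁻¹.mulVec x) ∂μ) ∧
      (∀ (f : Lp ℂ p (volume : Measure (Fin n → ℝ)))
         (g : Lp ℂ q (volume : Measure (Fin n → ℝ))),
        ∫ x : Fin n → ℝ, (H f : (Fin n → ℝ) → ℂ) x * (starRingEnd ℂ) (g x)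
          = ∫ x : Fin n → ℝ, (f : (Fin n → ℝ) → ℂ) x * (starRingEnd ℂ) ((H' g : (Fin n → ℝ) → ℂ) x)) := by
  classical
  -- exponent bookkeeping
  have hp0 : p ≠ 0 := fun h => by simp [h] at hp1
  have hq_ne_top : q ≠ ⊤ := by
    intro h
    subst h
    simp only [one_div, ENNReal.inv_top, add_zero, ENNReal.inv_eq_one] at hpq
    exact absurd (hpq ▸ hp1) (lt_irrefl 1)
  have hq0 : q ≠ 0 := by
    intro h
    subst h
    simp [one_div] at hpq
  set pr := p.toReal with hprdef
  set qr := q.toReal with hqrdef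
  have hpr1 : 1 < pr := by
    have := (ENNReal.toReal_lt_toReal (by simp) hp).2 hp1
    simpa using this
  have hsum : 1 / pr + 1 / qr = 1 := by
    have h1 : (1/p).toReal = 1/pr := by rw [ENNReal.toReal_div]; simp; rfl
    have h2 : (1/q).toReal = 1/qr := by rw [ENNReal.toReal_div]; simp; rfl
    have h3 : (1/p + 1/q).toReal = (1/p).toReal + (1/q).toReal :=
      ENNReal.toReal_add (by simp [one_div, hp0]) (by simp [one_div, hq0])
    rw [hpq] at h3
    simp only [ENNReal.toReal_one] at h3
    rw [h1, h2] at h3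
    linarith
  have hconj : pr.HolderConjugate qr := ⟨by simpa [one_div] using hsum, by linarith, ENNReal.toReal_pos hq0 hq_ne_top⟩
  have hqr1 : 1 < qr := hconj.symm.lt
  have hpr0 : (0:ℝ) < pr := lt_trans one_pos hpr1
  have hqr0 : (0:ℝ) < qr := lt_trans one_pos hqr1
  -- matrices and kernel
  set Bm : Ω → Matrix (Fin n) (Fin n) ℝ := fun v => (A v)⁻¹ with hBmdef
  have hB : ∀ i j, Measurable fun v => Bm v i j := fun i j => measurable_fam_inv hA i j
  have hdetA : ∀ᵐ v ∂μ, (A v).det ≠ 0 := by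
    filter_upwards [hinv] with v hv
    exact ((Matrix.isUnit_iff_isUnit_det _).1 hv).ne_zero
  have hdetBval : ∀ v, (Bm v).det = ((A v).det)⁻¹ := fun v => by
    simp only [hBmdef]
    rw [Matrix.det_nonsing_inv, Ring.inverse_eq_inv']
  have hdetB : ∀ᵐ v ∂μ, (Bm v).det ≠ 0 := by
    filter_upwards [hdetA] with v hv
    rw [hdetBval v]
    exact inv_ne_zero hv
  set k : Ω → ℂ := fun v => (starRingEnd ℂ) (K v) * ((|(A v).det|⁻¹ : ℝ) : ℂ) with hkdef
  have hkm : Measurable k :=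
    (Complex.continuous_conj.measurable.comp hK).mul
      (Complex.measurable_ofReal.comp ((measurable_fam_det hA).abs.inv))
  -- the constant
  set C : ℝ≥0∞ := ∫⁻ v, (‖K v‖₊ : ℝ≥0∞) * (ENNReal.ofReal |(A v).det|) ^ (-(1/pr)) ∂μ
    with hCdef
  have hCval : C = ENNReal.ofReal (∫ u, ‖K u‖ * |(A u).det| ^ (-(1/pr)) ∂μ) := by
    rw [MeasureTheory.ofReal_integral_eq_lintegral_ofReal hint
      (Eventually.of_forall fun u => by positivity)]
    refine lintegral_congr_ae ?_
    filter_upwards [hdetA] with v hv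
    rw [ENNReal.ofReal_mul (norm_nonneg _), ofReal_norm,
      ENNReal.ofReal_rpow_of_pos (abs_pos.2 hv)]
    rfl
  have hCtop : C ≠ ⊤ := by rw [hCval]; exact ENNReal.ofReal_ne_top
  have hkknorm : ∀ v, (‖k v‖₊ : ℝ≥0∞)
      = (‖K v‖₊ : ℝ≥0∞) * ENNReal.ofReal (|(A v).det|⁻¹) := by
    intro v
    rw [hkdef]
    simp only [nnnorm_mul, ENNReal.coe_mul]
    congr 1
    · rw [starRingEnd_apply, nnnorm_star]
    · rw [show ‖((|(A v).det|⁻¹ : ℝ) : ℂ)‖₊ = ‖(|(A v).det|⁻¹ : ℝ)‖₊ by simp,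
        ← enorm_eq_nnnorm, Real.enorm_eq_ofReal_abs, abs_of_nonneg (by positivity)]
  have hweight : ∫⁻ v, (‖k v‖₊ : ℝ≥0∞) * (ENNReal.ofReal |(Bm v).det|) ^ (-(1/qr)) ∂μ ≤ C := by
    rw [hCdef]
    refine le_of_eq (lintegral_congr_ae ?_)
    filter_upwards [hdetA] with v hv
    have habs : (0:ℝ) < |(A v).det| := abs_pos.2 hv
    have hx0 : ENNReal.ofReal |(A v).det| ≠ 0 := by
      simp only [ne_eq, ENNReal.ofReal_eq_zero, not_le]
      linarith
    have hxt : ENNReal.ofReal |(A v).det| ≠ ⊤ := ENNReal.ofReal_ne_top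
    rw [hkknorm v, hdetBval v, abs_inv, ENNReal.ofReal_inv_of_pos habs]
    rw [← ENNReal.rpow_neg_one (ENNReal.ofReal |(A v).det|), ← ENNReal.rpow_mul]
    rw [mul_assoc, ← ENNReal.rpow_add _ _ hx0 hxt]
    congr 2
    have : (1:ℝ)/pr = 1 - 1/qr := by linarith
    rw [this]
    ring
  -- the operator bound machine
  have hT := fun (G : (Fin n → ℝ) → ℂ) (hGm : Measurable G)
      (hGq : eLpNorm G q (volume : Measure (Fin n → ℝ)) ≠ ⊤) =>
    hausdorff_T_props μ Bm hB hdetB k hkm hq0 hq_ne_top hconj hqrdef.symm C hweight hCtop G hGm hGq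
  have memT : ∀ g : Lp ℂ q (volume : Measure (Fin n → ℝ)),
      MemLp (fun x => ∫ v, k v * (g : (Fin n → ℝ) → ℂ) ((Bm v).mulVec x) ∂μ) q
        (volume : Measure (Fin n → ℝ)) := by
    intro g
    obtain ⟨h1, h2, -⟩ := hT _ (Lp.stronglyMeasurable g).measurable (Lp.eLpNorm_ne_top g)
    exact ⟨h1, lt_of_le_of_lt h2 (ENNReal.mul_lt_top hCtop.lt_top (Lp.eLpNorm_lt_top g))⟩
  -- congruence in the function argument
  have Tcongr : ∀ (G₁ G₂ : (Fin n → ℝ) → ℂ), G₁ =ᵐ[(volume : Measure (Fin n → ℝ))] G₂ →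
      (fun x => ∫ v, k v * G₁ ((Bm v).mulVec x) ∂μ)
        =ᵐ[(volume : Measure (Fin n → ℝ))] fun x => ∫ v, k v * G₂ ((Bm v).mulVec x) ∂μ := by
    intro G₁ G₂ hGG
    have hN : volume (toMeasurable volume {y | G₁ y ≠ G₂ y}) = 0 := by
      rw [measure_toMeasurable]
      exact ae_iff.1 hGG
    have hmem := ae_ae_not_mem_null μ Bm hB hdetB (measurableSet_toMeasurable _ _) hN
    filter_upwards [hmem] with x hx
    refine integral_congr_ae ?_
    filter_upwards [hx] with v hv
    have : G₁ ((Bm v).mulVec x) = G₂ ((Bm v).mulVec x) := by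
      by_contra hne
      exact hv (subset_toMeasurable _ _ hne)
    rw [this]
  -- additivity a.e.
  have Tadd : ∀ (G₁ G₂ : (Fin n → ℝ) → ℂ), Measurable G₁ → Measurable G₂ →
      eLpNorm G₁ q (volume : Measure (Fin n → ℝ)) ≠ ⊤ →
      eLpNorm G₂ q (volume : Measure (Fin n → ℝ)) ≠ ⊤ →
      (fun x => ∫ v, k v * (G₁ ((Bm v).mulVec x) + G₂ ((Bm v).mulVec x)) ∂μ)
        =ᵐ[(volume : Measure (Fin n → ℝ))]
        (fun x => (∫ v, k v * G₁ ((Bm v).mulVec x) ∂μ)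
          + ∫ v, k v * G₂ ((Bm v).mulVec x) ∂μ) := by
    intro G₁ G₂ h1 h2 e1 e2
    obtain ⟨-, -, i1⟩ := hT G₁ h1 e1
    obtain ⟨-, -, i2⟩ := hT G₂ h2 e2
    filter_upwards [i1, i2] with x hx1 hx2
    rw [← integral_add hx1 hx2]
    refine integral_congr_ae (Eventually.of_forall fun v => ?_)
    ring
  -- the Lp-to-Lp map
  set TL : Lp ℂ q (volume : Measure (Fin n → ℝ)) → Lp ℂ q (volume : Measure (Fin n → ℝ)) :=
    fun g => (memT g).toLp _ with hTLdef
  have hTL_coe : ∀ g : Lp ℂ q (volume : Measure (Fin n → ℝ)), (TL g : (Fin n → ℝ) → ℂ)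
      =ᵐ[(volume : Measure (Fin n → ℝ))]
        fun x => ∫ v, k v * (g : (Fin n → ℝ) → ℂ) ((Bm v).mulVec x) ∂μ :=
    fun g => (memT g).coeFn_toLp
  have hTLadd : ∀ g h : Lp ℂ q (volume : Measure (Fin n → ℝ)), TL (g + h) = TL g + TL h := by
    intro g h
    refine Lp.ext ?_
    have hco : ((g + h : Lp ℂ q (volume : Measure (Fin n → ℝ))) : (Fin n → ℝ) → ℂ)
        =ᵐ[(volume : Measure (Fin n → ℝ))]
        ((g : (Fin n → ℝ) → ℂ) + (h : (Fin n → ℝ) → ℂ)) := Lp.coeFn_add g h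
    have step := Tcongr _ _ hco
    have step2 := Tadd (g : (Fin n → ℝ) → ℂ) (h : (Fin n → ℝ) → ℂ)
      (Lp.stronglyMeasurable g).measurable (Lp.stronglyMeasurable h).measurable
      (Lp.eLpNorm_ne_top g) (Lp.eLpNorm_ne_top h)
    have c4 := Lp.coeFn_add (TL g) (TL h)
    filter_upwards [hTL_coe (g + h), hTL_coe g, hTL_coe h, step, step2, c4]
      with x e1 e2 e3 e4 e5 e6
    rw [e1, e6]
    simp only [Pi.add_apply]
    rw [e2, e3, e4]
    simp only [Pi.add_apply] at e5 ⊢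
    exact e5
  have hTLsmul : ∀ (c : ℂ) (g : Lp ℂ q (volume : Measure (Fin n → ℝ))),
      TL (c • g) = c • TL g := by
    intro c g
    refine Lp.ext ?_
    have hco : ((c • g : Lp ℂ q (volume : Measure (Fin n → ℝ))) : (Fin n → ℝ) → ℂ)
        =ᵐ[(volume : Measure (Fin n → ℝ))]
        (c • (g : (Fin n → ℝ) → ℂ)) := Lp.coeFn_smul c g
    have step := Tcongr _ _ hco
    have c4 := Lp.coeFn_smul c (TL g)
    filter_upwards [hTL_coe (c • g), hTL_coe g, step, c4] with x e1 e2 e4 e6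
    rw [e1, e6, e4]
    simp only [Pi.smul_apply, smul_eq_mul]
    rw [e2]
    calc ∫ v, k v * (c * (g : (Fin n → ℝ) → ℂ) ((Bm v).mulVec x)) ∂μ
        = ∫ v, c * (k v * (g : (Fin n → ℝ) → ℂ) ((Bm v).mulVec x)) ∂μ :=
          integral_congr_ae (Eventually.of_forall fun v => by ring)
      _ = c * ∫ v, k v * (g : (Fin n → ℝ) → ℂ) ((Bm v).mulVec x) ∂μ := integral_const_mul _ _
  set L : Lp ℂ q (volume : Measure (Fin n → ℝ)) →ₗ[ℂ] Lp ℂ q (volume : Measure (Fin n → ℝ)) :=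
    { toFun := TL, map_add' := hTLadd, map_smul' := hTLsmul } with hLdef
  have hLb : ∀ g : Lp ℂ q (volume : Measure (Fin n → ℝ)), ‖L g‖ ≤ C.toReal * ‖g‖ := by
    intro g
    have h2 := (hT _ (Lp.stronglyMeasurable g).measurable (Lp.eLpNorm_ne_top g)).2.1
    have hnorm : ‖L g‖ = (eLpNorm
        (fun x => ∫ v, k v * (g : (Fin n → ℝ) → ℂ) ((Bm v).mulVec x) ∂μ) q
        (volume : Measure (Fin n → ℝ))).toReal := Lp.norm_toLp _ (memT g)
    rw [hnorm]
    calc (eLpNorm (fun x => ∫ v, k v * (g : (Fin n → ℝ) → ℂ) ((Bm v).mulVec x) ∂μ) q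
          (volume : Measure (Fin n → ℝ))).toReal
        ≤ (C * eLpNorm (g : (Fin n → ℝ) → ℂ) q (volume : Measure (Fin n → ℝ))).toReal :=
          ENNReal.toReal_mono (ENNReal.mul_ne_top hCtop (Lp.eLpNorm_ne_top g)) h2
      _ = C.toReal * ‖g‖ := by rw [ENNReal.toReal_mul, Lp.norm_def]
  refine ⟨L.mkContinuous C.toReal hLb, ?_, ?_⟩
  · intro g
    filter_upwards [hTL_coe g] with x hx
    exact hx
  · intro f g
    have hH'coe : ((L.mkContinuous C.toReal hLb) g : (Fin n → ℝ) → ℂ)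
        =ᵐ[(volume : Measure (Fin n → ℝ))]
        fun x => ∫ v, k v * (g : (Fin n → ℝ) → ℂ) ((Bm v).mulVec x) ∂μ := hTL_coe g
    set F : (Fin n → ℝ) → ℂ := (f : (Fin n → ℝ) → ℂ) with hFdef
    set G : (Fin n → ℝ) → ℂ := (g : (Fin n → ℝ) → ℂ) with hGdef
    have hFm : Measurable F := (Lp.stronglyMeasurable f).measurable
    have hGm : Measurable G := (Lp.stronglyMeasurable g).measurable
    have hGc : Measurable fun y => (starRingEnd ℂ) (G y) :=
      Complex.continuous_conj.measurable.comp hGm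
    have hFp : ∫⁻ y, (‖F y‖₊ : ℝ≥0∞) ^ pr ≠ ⊤ :=
      lint_ne_top_of_eLpNorm hp0 hp (Lp.eLpNorm_ne_top f)
    have hGq' : ∫⁻ y, (‖(starRingEnd ℂ) (G y)‖₊ : ℝ≥0∞) ^ qr ≠ ⊤ := by
      have h0 := lint_ne_top_of_eLpNorm hq0 hq_ne_top (Lp.eLpNorm_ne_top g)
      have heq : ∀ y : Fin n → ℝ, (‖(starRingEnd ℂ) (G y)‖₊ : ℝ≥0∞) = (‖G y‖₊ : ℝ≥0∞) :=
        fun y => by rw [starRingEnd_apply, nnnorm_star]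
      simp only [heq]
      exact h0
    have hint1 : Integrable (Function.uncurry fun u x =>
        K u * F ((A u).mulVec x) * (starRingEnd ℂ) (G x))
        (μ.prod (volume : Measure (Fin n → ℝ))) :=
      pairing_integrable μ A hA hdetA K hK F (fun y => (starRingEnd ℂ) (G y)) hFm hGc hconj C
        hCdef.ge hCtop hFp hGq'
    have stepA : (∫ x : Fin n → ℝ, (H f : (Fin n → ℝ) → ℂ) x * (starRingEnd ℂ) (G x))
        = ∫ x : Fin n → ℝ, ∫ u, K u * F ((A u).mulVec x) * (starRingEnd ℂ) (G x) ∂μ := by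
      refine integral_congr_ae ?_
      filter_upwards [hH f] with x hx
      rw [hx, ← integral_mul_const]
    have stepB : (∫ x : Fin n → ℝ, ∫ u, K u * F ((A u).mulVec x) * (starRingEnd ℂ) (G x) ∂μ)
        = ∫ u, (∫ x : Fin n → ℝ, K u * F ((A u).mulVec x) * (starRingEnd ℂ) (G x)) ∂μ :=
      (integral_integral_swap hint1).symm
    set c2 : Ω → ℂ := fun u => K u * ((|(A u).det|⁻¹ : ℝ) : ℂ) with hc2def
    have hc2m : Measurable c2 :=
      hK.mul (Complex.measurable_ofReal.comp ((measurable_fam_det hA).abs.inv))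
    have stepC : (∫ u, (∫ x : Fin n → ℝ, K u * F ((A u).mulVec x) * (starRingEnd ℂ) (G x)) ∂μ)
        = ∫ u, (∫ y : Fin n → ℝ, c2 u * (starRingEnd ℂ) (G ((Bm u).mulVec y)) * F y) ∂μ := by
      refine integral_congr_ae ?_
      filter_upwards [hdetA] with u hu
      have hxid : ∀ x : Fin n → ℝ, (Bm u).mulVec ((A u).mulVec x) = x := by
        intro x
        simp only [hBmdef]
        rw [Matrix.mulVec_mulVec, Matrix.nonsing_inv_mul _ (isUnit_iff_ne_zero.2 hu),
          Matrix.one_mulVec]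
      have hmv : Measurable fun y : Fin n → ℝ => (Bm u).mulVec y :=
        (funext fun x => (Matrix.toLin'_apply (Bm u) x)) ▸ measurable_toLin' (Bm u)
      have hmeas' : AEStronglyMeasurable
          (fun y : Fin n → ℝ => K u * ((starRingEnd ℂ) (G ((Bm u).mulVec y)) * F y))
          (volume : Measure (Fin n → ℝ)) :=
        (((hGc.comp hmv).mul hFm).const_mul _).aestronglyMeasurable
      calc (∫ x : Fin n → ℝ, K u * F ((A u).mulVec x) * (starRingEnd ℂ) (G x))
          = ∫ x : Fin n → ℝ,
              (fun y => K u * ((starRingEnd ℂ) (G ((Bm u).mulVec y)) * F y)) ((A u).mulVec x) := by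
            refine integral_congr_ae (Eventually.of_forall fun x => ?_)
            simp only
            rw [hxid x]
            ring
        _ = |(A u).det|⁻¹ • ∫ y : Fin n → ℝ, K u * ((starRingEnd ℂ) (G ((Bm u).mulVec y)) * F y) :=
            integral_comp_mulVec hu _ hmeas'
        _ = ((|(A u).det|⁻¹ : ℝ) : ℂ)
              * ∫ y : Fin n → ℝ, K u * ((starRingEnd ℂ) (G ((Bm u).mulVec y)) * F y) :=
            Complex.real_smul
        _ = ∫ y : Fin n → ℝ, c2 u * (starRingEnd ℂ) (G ((Bm u).mulVec y)) * F y := by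
            rw [← integral_const_mul]
            refine integral_congr_ae (Eventually.of_forall fun y => ?_)
            show ((|(A u).det|⁻¹ : ℝ) : ℂ) * (K u * ((starRingEnd ℂ) (G ((Bm u).mulVec y)) * F y))
                = c2 u * (starRingEnd ℂ) (G ((Bm u).mulVec y)) * F y
            simp only [hc2def]
            ring
    have hweight2 : ∫⁻ v, (‖c2 v‖₊ : ℝ≥0∞) * (ENNReal.ofReal |(Bm v).det|) ^ (-(1/qr)) ∂μ
        ≤ C := by
      refine le_trans (le_of_eq (lintegral_congr fun v => ?_)) hweight
      congr 2
      simp only [hc2def, hkdef, nnnorm_mul]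
      congr 1
      rw [starRingEnd_apply, nnnorm_star]
    have hint2 : Integrable (Function.uncurry fun u y =>
        c2 u * (starRingEnd ℂ) (G ((Bm u).mulVec y)) * F y)
        (μ.prod (volume : Measure (Fin n → ℝ))) :=
      pairing_integrable μ Bm hB hdetB c2 hc2m (fun y => (starRingEnd ℂ) (G y)) F hGc hFm
        hconj.symm C hweight2 hCtop hGq' hFp
    have stepD : (∫ u, (∫ y : Fin n → ℝ, c2 u * (starRingEnd ℂ) (G ((Bm u).mulVec y)) * F y) ∂μ)
        = ∫ y : Fin n → ℝ, ∫ u, c2 u * (starRingEnd ℂ) (G ((Bm u).mulVec y)) * F y ∂μ :=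
      integral_integral_swap hint2
    have stepE : (∫ y : Fin n → ℝ, ∫ u, c2 u * (starRingEnd ℂ) (G ((Bm u).mulVec y)) * F y ∂μ)
        = ∫ y : Fin n → ℝ, F y
            * (starRingEnd ℂ) (((L.mkContinuous C.toReal hLb) g : (Fin n → ℝ) → ℂ) y) := by
      refine integral_congr_ae ?_
      filter_upwards [hH'coe] with y hy
      rw [hy, ← integral_conj, ← integral_const_mul]
      refine integral_congr_ae (Eventually.of_forall fun u => ?_)
      show c2 u * (starRingEnd ℂ) (G ((Bm u).mulVec y)) * F y
          = F y * (starRingEnd ℂ) (k u * G ((Bm u).mulVec y))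
      simp only [hc2def, hkdef, _root_.map_mul, Complex.conj_conj, Complex.conj_ofReal]
      ring
    exact stepA.trans (stepB.trans (stepC.trans (stepD.trans stepE)))
end

section
/- Let U be the positive hyperoctant, 1 ≤ p ≤ 2, and let K be the operator (K f)(x) = ∫_{Ω'} K(u) f(D(u) x) dμ(u) on L^p(U), where D(u) = diag(d_1(u), …, d_n(u)) with all d_k(u) > 0 and |K(u)| (∏_k d_k(u))^{-1/p} integrable on Ω'. Then for every f ∈ L^p(U), the modified Mellin transform satisfies (M K f)(s) = φ(s) · (M f)(s) for a.e. s ∈ ℝ^n, where φ(s) = ∫_{Ω'} K(u) ∏_k d_k(u)^{-1/p − i s_k} dμ(u); moreover φ is bounded and continuous on ℝ^n. -/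
open MeasureTheory Matrix Filter Topology Complex
open scoped ENNReal NNReal Real

namespace MellinSymbolAux

variable {n : ℕ}

def posOrth (n : ℕ) : Set (Fin n → ℝ) := {x | ∀ j, 0 < x j}

lemma measurableSet_posOrth : MeasurableSet (posOrth n) := by
  have : posOrth n = ⋂ j, {x : Fin n → ℝ | 0 < x j} := by
    ext x; simp [posOrth, Set.mem_iInter]
  rw [this]
  exact MeasurableSet.iInter fun j => measurableSet_lt measurable_const (measurable_pi_apply j)

def dil (c : Fin n → ℝ) : (Fin n → ℝ) → Fin n → ℝ := fun x j => c j * x j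

lemma measurable_dil (c : Fin n → ℝ) : Measurable (dil c) :=
  measurable_pi_lambda _ fun j => (measurable_pi_apply j).const_mul _

lemma dil_eq_toLin' (c : Fin n → ℝ) : dil c = ⇑(Matrix.toLin' (Matrix.diagonal c)) := by
  funext x; funext j
  simp [dil, Matrix.toLin'_apply, Matrix.mulVec_diagonal]

lemma dil_preimage_posOrth {c : Fin n → ℝ} (hc : ∀ k, 0 < c k) :
    dil c ⁻¹' posOrth n = posOrth n := by
  ext x
  refine forall_congr' fun j => ?_
  simp only [dil]
  constructor
  · intro h
    by_contra hle
    have : c j * x j ≤ 0 := mul_nonpos_of_nonneg_of_nonpos (hc j).le (not_lt.mp hle)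
    exact absurd h (not_lt.mpr this)
  · intro h; exact mul_pos (hc j) h

lemma prod_pos {c : Fin n → ℝ} (hc : ∀ k, 0 < c k) : 0 < ∏ k, c k :=
  Finset.prod_pos fun k _ => hc k

lemma map_dil {c : Fin n → ℝ} (hc : ∀ k, 0 < c k) :
    Measure.map (dil c) (volume.restrict (posOrth n)) =
      ENNReal.ofReal (∏ k, c k)⁻¹ • volume.restrict (posOrth n) := by
  have hdet : (Matrix.diagonal c).det ≠ 0 := by
    rw [Matrix.det_diagonal]; exact (prod_pos hc).ne'
  have h1 : volume.restrict (posOrth n) = volume.restrict (dil c ⁻¹' posOrth n) := by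
    rw [dil_preimage_posOrth hc]
  calc Measure.map (dil c) (volume.restrict (posOrth n))
      = (Measure.map (dil c) volume).restrict (posOrth n) := by
        rw [h1, ← Measure.restrict_map (measurable_dil c) measurableSet_posOrth]
    _ = (ENNReal.ofReal |(Matrix.diagonal c).det⁻¹| • volume).restrict (posOrth n) := by
        rw [dil_eq_toLin' c, Real.map_matrix_volume_pi_eq_smul_volume_pi hdet]
    _ = ENNReal.ofReal (∏ k, c k)⁻¹ • volume.restrict (posOrth n) := by
        rw [Measure.restrict_smul, Matrix.det_diagonal, abs_of_pos (inv_pos.2 (prod_pos hc))]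

lemma ae_dil {c : Fin n → ℝ} (hc : ∀ k, 0 < c k) {P : (Fin n → ℝ) → Prop}
    (h : ∀ᵐ x ∂volume.restrict (posOrth n), P x) :
    ∀ᵐ x ∂volume.restrict (posOrth n), P (dil c x) := by
  rw [ae_iff] at h ⊢
  obtain ⟨N, hsub, hNm, hN0⟩ := exists_measurable_superset_of_null h
  have hkey : volume.restrict (posOrth n) (dil c ⁻¹' N) = 0 := by
    have := Measure.map_apply (μ := volume.restrict (posOrth n)) (measurable_dil c) hNm
    rw [map_dil hc] at this
    rw [← this]
    simp [hN0]
  refine measure_mono_null ?_ hkey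
  intro x hx
  exact hsub hx

lemma lintegral_dil {c : Fin n → ℝ} (hc : ∀ k, 0 < c k) {g : (Fin n → ℝ) → ℝ≥0∞}
    (hg : Measurable g) :
    ∫⁻ x, g (dil c x) ∂volume.restrict (posOrth n)
      = ENNReal.ofReal (∏ k, c k)⁻¹ * ∫⁻ x, g x ∂volume.restrict (posOrth n) := by
  rw [← lintegral_map hg (measurable_dil c), map_dil hc, lintegral_smul_measure, smul_eq_mul]

lemma integral_dil {E : Type*} [NormedAddCommGroup E] [NormedSpace ℝ E]
    {c : Fin n → ℝ} (hc : ∀ k, 0 < c k) {g : (Fin n → ℝ) → E}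
    (hg : AEStronglyMeasurable g (volume.restrict (posOrth n))) :
    ∫ x, g (dil c x) ∂volume.restrict (posOrth n)
      = (∏ k, c k)⁻¹ • ∫ x, g x ∂volume.restrict (posOrth n) := by
  have hg' : AEStronglyMeasurable g (Measure.map (dil c) (volume.restrict (posOrth n))) := by
    rw [map_dil hc]
    exact hg.mono_ac (Measure.smul_absolutelyContinuous)
  rw [← integral_map (measurable_dil c).aemeasurable hg', map_dil hc, integral_smul_measure,
    ENNReal.toReal_ofReal (inv_nonneg.2 (prod_pos hc).le)]

lemma integrable_comp_dil {E : Type*} [NormedAddCommGroup E]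
    {c : Fin n → ℝ} (hc : ∀ k, 0 < c k) {g : (Fin n → ℝ) → E}
    (hg : AEStronglyMeasurable g (volume.restrict (posOrth n)))
    (hgi : Integrable g (volume.restrict (posOrth n))) :
    Integrable (g ∘ dil c) (volume.restrict (posOrth n)) := by
  have hg' : AEStronglyMeasurable g (Measure.map (dil c) (volume.restrict (posOrth n))) := by
    rw [map_dil hc]
    exact hg.mono_ac (Measure.smul_absolutelyContinuous)
  rw [← integrable_map_measure hg' (measurable_dil c).aemeasurable, map_dil hc]
  exact hgi.smul_measure ENNReal.ofReal_ne_top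


lemma exponent_facts (p q : ℝ≥0∞) [hp1 : Fact (1 ≤ p)] [hq1 : Fact (1 ≤ q)]
    (hp2 : p ≤ 2) (hpq : 1 / p + 1 / q = 1) :
    1 / q.toReal = 1 - 1 / p.toReal ∧ 0 < 1 / p.toReal ∧ 1 / p.toReal ≤ 1 := by
  have hpne0 : p ≠ 0 := by
    intro h; exact absurd (h ▸ hp1.out) (by simp)
  have hpnetop : p ≠ ∞ := fun h => by
    rw [h] at hp2; exact absurd hp2 (by simp)
  have hptR : 1 ≤ p.toReal := by
    rw [← ENNReal.toReal_one]
    exact ENNReal.toReal_mono hpnetop hp1.out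
  have hbpos : 0 < 1 / p.toReal := by positivity
  refine ⟨?_, hbpos, by
    rw [div_le_one (by linarith)]; linarith⟩
  by_cases hq : q = ∞
  · subst hq
    have hp1' : 1 / p = 1 := by simpa using hpq
    have hp' : p = 1 := by
      rw [one_div] at hp1'
      rw [← inv_inv p, hp1', inv_one]
    subst hp'
    simp
  · have hqne0 : q ≠ 0 := by
      intro h; exact absurd (h ▸ hq1.out) (by simp)
    have h1 : (1 / p + 1 / q).toReal = (1 : ℝ≥0∞).toReal := by rw [hpq]
    rw [ENNReal.toReal_add (by simp [hpne0]) (by simp [hqne0]), ENNReal.toReal_one] at h1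
    rw [one_div, one_div, ENNReal.toReal_inv, ENNReal.toReal_inv, ← one_div, ← one_div] at h1
    linarith

lemma norm_prod_cpow {x : Fin n → ℝ} (hx : ∀ j, 0 < x j) (z : Fin n → ℂ) :
    ‖∏ j, (x j : ℂ) ^ z j‖ = ∏ j, x j ^ (z j).re := by
  rw [norm_prod]
  exact Finset.prod_congr rfl fun j _ => by
    rw [Complex.norm_cpow_eq_rpow_re_of_pos (hx j)]

lemma measurable_prod_cpow (z : Fin n → ℂ) :
    Measurable fun x : Fin n → ℝ => ∏ j, (x j : ℂ) ^ z j :=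
  Finset.measurable_prod _ fun j _ =>
    (Complex.measurable_ofReal.comp (measurable_pi_apply j)).pow_const _

lemma measurable_weight (a : ℝ) : Measurable fun x : Fin n → ℝ => ∏ j, x j ^ a :=
  Finset.measurable_prod _ fun j _ => (measurable_pi_apply j).pow_const _

lemma prod_cpow_dil {c x : Fin n → ℝ} (hc : ∀ k, 0 < c k) (hx : ∀ j, 0 < x j) (z : Fin n → ℂ) :
    ∏ j, ((dil c x j : ℝ) : ℂ) ^ z j = (∏ j, (c j : ℂ) ^ z j) * ∏ j, (x j : ℂ) ^ z j := by
  rw [← Finset.prod_mul_distrib]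
  refine Finset.prod_congr rfl fun j _ => ?_
  have h := Complex.mul_cpow_ofReal_nonneg (hc j).le (hx j).le (z j)
  simpa [dil] using h

lemma prod_rpow_dil {c x : Fin n → ℝ} (hc : ∀ k, 0 < c k) (hx : ∀ j, 0 < x j) (a : ℝ) :
    ∏ j, (dil c x j) ^ a = (∏ j, c j) ^ a * ∏ j, (x j) ^ a := by
  rw [← Real.finset_prod_rpow _ _ (fun k _ => (hc k).le) a, ← Finset.prod_mul_distrib]
  exact Finset.prod_congr rfl fun j _ => Real.mul_rpow (hc j).le (hx j).le

lemma re_z (a : ℝ) (s : Fin n → ℝ) (j : Fin n) : ((-(a : ℂ)) + Complex.I * (s j : ℂ)).re = -a := by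
  simp

lemma norm_symbol_term {c : Fin n → ℝ} (hc : ∀ k, 0 < c k) (b : ℝ) (s : Fin n → ℝ) :
    ‖∏ k, ((c k : ℂ) ^ ((-(b : ℂ)) - Complex.I * (s k : ℂ)))‖ = (∏ k, c k) ^ (-b) := by
  rw [norm_prod, ← Real.finset_prod_rpow _ _ (fun k _ => (hc k).le) (-b)]
  refine Finset.prod_congr rfl fun k _ => ?_
  rw [Complex.norm_cpow_eq_rpow_re_of_pos (hc k)]
  congr 1
  simp


lemma cpow_prod_cancel {c : Fin n → ℝ} (hc : ∀ k, 0 < c k) (z : Fin n → ℂ) :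
    (∏ j, (c j : ℂ) ^ (-(z j))) * (∏ j, (c j : ℂ) ^ z j) = 1 := by
  rw [← Finset.prod_mul_distrib, Finset.prod_eq_one]
  intro j _
  rw [← Complex.cpow_add _ _ (Complex.ofReal_ne_zero.mpr (hc j).ne'), neg_add_cancel,
    Complex.cpow_zero]

lemma integral_cpow_dil {c : Fin n → ℝ} (hc : ∀ k, 0 < c k) (z : Fin n → ℂ)
    (g : (Fin n → ℝ) → ℂ)
    (hg : AEStronglyMeasurable (fun y => (∏ j, (y j : ℂ) ^ z j) * g y)
      (volume.restrict (posOrth n))) :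
    ∫ x in posOrth n, (∏ j, (x j : ℂ) ^ z j) * g (dil c x)
      = (∏ j, (c j : ℂ) ^ (-(z j) - 1)) *
          ∫ y in posOrth n, (∏ j, (y j : ℂ) ^ z j) * g y := by
  have h1 : ∀ᵐ x ∂volume.restrict (posOrth n),
      (∏ j, (x j : ℂ) ^ z j) * g (dil c x)
        = (∏ j, (c j : ℂ) ^ (-(z j))) *
            ((fun y => (∏ j, (y j : ℂ) ^ z j) * g y) (dil c x)) := by
    filter_upwards [ae_restrict_mem measurableSet_posOrth] with x hx
    rw [prod_cpow_dil hc hx z, ← mul_assoc, ← mul_assoc, cpow_prod_cancel hc z, one_mul]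
  rw [integral_congr_ae h1, MeasureTheory.integral_const_mul, integral_dil hc hg]
  have h2 : (∏ k, c k)⁻¹ • (∫ y in posOrth n, (∏ j, (y j : ℂ) ^ z j) * g y)
      = (∏ j, (c j : ℂ) ^ (-1 : ℂ)) * ∫ y in posOrth n, (∏ j, (y j : ℂ) ^ z j) * g y := by
    rw [Complex.real_smul]
    congr 1
    push_cast
    rw [← Finset.prod_inv_distrib]
    exact Finset.prod_congr rfl fun j _ => (Complex.cpow_neg_one _).symm
  rw [h2, ← mul_assoc, ← Finset.prod_mul_distrib]
  congr 1
  refine Finset.prod_congr rfl fun j _ => ?_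
  rw [← Complex.cpow_add _ _ (Complex.ofReal_ne_zero.mpr (hc j).ne')]
  ring_nf

lemma integral_rpow_dil {c : Fin n → ℝ} (hc : ∀ k, 0 < c k) (a : ℝ)
    (g : (Fin n → ℝ) → ℝ)
    (hg : AEStronglyMeasurable (fun y => (∏ j, (y j) ^ a) * g y)
      (volume.restrict (posOrth n))) :
    ∫ x in posOrth n, (∏ j, (x j) ^ a) * g (dil c x)
      = (∏ k, c k) ^ (-a - 1) * ∫ y in posOrth n, (∏ j, (y j) ^ a) * g y := by
  have hcp := prod_pos hc
  have h1 : ∀ᵐ x ∂volume.restrict (posOrth n),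
      (∏ j, (x j) ^ a) * g (dil c x)
        = (∏ k, c k) ^ (-a) *
            ((fun y => (∏ j, (y j) ^ a) * g y) (dil c x)) := by
    filter_upwards [ae_restrict_mem measurableSet_posOrth] with x hx
    rw [prod_rpow_dil hc hx a, ← mul_assoc, ← mul_assoc, ← Real.rpow_add hcp, neg_add_cancel,
      Real.rpow_zero, one_mul]
  rw [integral_congr_ae h1, MeasureTheory.integral_const_mul, integral_dil hc hg, smul_eq_mul,
    ← mul_assoc]
  congr 1
  rw [← Real.rpow_neg_one (∏ k, c k), ← Real.rpow_add hcp]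
  ring_nf


lemma mul_shuffle (A B C D E : ℂ) (h : A * B = 1) : (D * A) * ((B * C) * E) = C * (D * E) := by
  have : (D * A) * ((B * C) * E) = (A * B) * (C * (D * E)) := by ring
  rw [this, h, one_mul]

lemma fubini_main {Ω : Type*} [MeasurableSpace Ω] (μ : Measure Ω) [SigmaFinite μ]
    (K : Ω → ℂ) (hK : Measurable K)
    (d : Fin n → Ω → ℝ) (hd : ∀ k, Measurable (d k)) (hdpos : ∀ k u, 0 < d k u)
    (a b : ℝ) (hab : a = 1 - b)
    (hint : Integrable (fun u => ‖K u‖ * (∏ k, d k u) ^ (-b)) μ)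
    (f' : (Fin n → ℝ) → ℂ) (hf's : StronglyMeasurable f')
    (H1 : Integrable (fun x : Fin n → ℝ => (∏ j, (x j) ^ (-a)) * ‖f' x‖)
      ((volume : Measure (Fin n → ℝ)).restrict (posOrth n))) :
    Integrable (fun x : Fin n → ℝ =>
        (∏ j, (x j) ^ (-a)) * ‖∫ u, K u * f' (dil (fun k => d k u) x) ∂μ‖)
      ((volume : Measure (Fin n → ℝ)).restrict (posOrth n)) ∧
    ∀ s : Fin n → ℝ,
      ∫ x in posOrth n,
          (∏ j, (x j : ℂ) ^ (-(a : ℂ) + Complex.I * (s j : ℂ))) *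
            (∫ u, K u * f' (dil (fun k => d k u) x) ∂μ)
        = (∫ u, K u * ∏ k, ((d k u : ℂ) ^ (-(b : ℂ) - Complex.I * (s k : ℂ))) ∂μ) *
          ∫ x in posOrth n, (∏ j, (x j : ℂ) ^ (-(a : ℂ) + Complex.I * (s j : ℂ))) * f' x := by
  have hdp : ∀ u, 0 < ∏ k, d k u := fun u => Finset.prod_pos fun k _ => hdpos k u
  -- norm of the complex weight on the positive orthant
  have hnormP : ∀ (s : Fin n → ℝ) {x : Fin n → ℝ}, x ∈ posOrth n →
      ‖∏ j, (x j : ℂ) ^ (-(a : ℂ) + Complex.I * (s j : ℂ))‖ = ∏ j, (x j) ^ (-a) := by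
    intro s x hx
    rw [norm_prod_cpow hx]
    refine Finset.prod_congr rfl fun j _ => ?_
    congr 1
    simp
  have hwnn : ∀ {x : Fin n → ℝ}, x ∈ posOrth n → 0 ≤ ∏ j, (x j) ^ (-a) := fun {x} hx =>
    Finset.prod_nonneg fun j _ => Real.rpow_nonneg (hx j).le _
  -- joint measurability
  have hTm : Measurable fun r : Ω × (Fin n → ℝ) => dil (fun k => d k r.1) r.2 :=
    measurable_pi_lambda _ fun j =>
      ((hd j).comp measurable_fst).mul ((measurable_pi_apply j).comp measurable_snd)
  have hKf'sm : StronglyMeasurable fun r : Ω × (Fin n → ℝ) =>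
      K r.1 * f' (dil (fun k => d k r.1) r.2) :=
    (hK.comp measurable_fst).stronglyMeasurable.mul (hf's.comp_measurable hTm)
  have hΦsm : ∀ s : Fin n → ℝ, StronglyMeasurable fun r : Ω × (Fin n → ℝ) =>
      (∏ j, (r.2 j : ℂ) ^ (-(a : ℂ) + Complex.I * (s j : ℂ))) *
        (K r.1 * f' (dil (fun k => d k r.1) r.2)) := fun s =>
    ((measurable_prod_cpow _).comp measurable_snd).stronglyMeasurable.mul hKf'sm
  -- integrability of the weighted f'
  have hG'base : ∀ s : Fin n → ℝ, Integrable
      (fun y : Fin n → ℝ => (∏ j, (y j : ℂ) ^ (-(a : ℂ) + Complex.I * (s j : ℂ))) * f' y)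
      ((volume : Measure (Fin n → ℝ)).restrict (posOrth n)) := by
    intro s
    refine Integrable.mono' H1
      ((measurable_prod_cpow _).stronglyMeasurable.mul hf's).aestronglyMeasurable ?_
    filter_upwards [ae_restrict_mem measurableSet_posOrth] with y hy
    rw [norm_mul, hnormP s hy]
  have hcoeff : ∀ (s : Fin n → ℝ) (k : Fin n),
      -(-(a : ℂ) + Complex.I * (s k : ℂ)) - 1 = -(b : ℂ) - Complex.I * (s k : ℂ) := by
    intro s k
    have h : (a : ℂ) = 1 - (b : ℂ) := by exact_mod_cast congrArg Complex.ofReal hab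
    rw [neg_add, neg_neg, h]
    ring
  -- complex change of variables, per u
  have hCV : ∀ (s : Fin n → ℝ) (u : Ω),
      ∫ x in posOrth n,
          (∏ j, (x j : ℂ) ^ (-(a : ℂ) + Complex.I * (s j : ℂ))) * f' (dil (fun k => d k u) x)
        = (∏ k, (d k u : ℂ) ^ (-(b : ℂ) - Complex.I * (s k : ℂ))) *
          ∫ y in posOrth n, (∏ j, (y j : ℂ) ^ (-(a : ℂ) + Complex.I * (s j : ℂ))) * f' y := by
    intro s u
    rw [integral_cpow_dil (fun k => hdpos k u) _ f' (hG'base s).aestronglyMeasurable]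
    congr 1
    exact Finset.prod_congr rfl fun k _ => by rw [hcoeff s k]
  -- real change of variables, per u
  have hRV : ∀ u : Ω,
      ∫ x in posOrth n, (∏ j, (x j) ^ (-a)) * ‖f' (dil (fun k => d k u) x)‖
        = (∏ k, d k u) ^ (-b) * ∫ y in posOrth n, (∏ j, (y j) ^ (-a)) * ‖f' y‖ := by
    intro u
    rw [integral_rpow_dil (fun k => hdpos k u) (-a) (fun y => ‖f' y‖) H1.aestronglyMeasurable]
    congr 2
    rw [hab]; ring
  -- product integrability
  have hΦint : ∀ s : Fin n → ℝ, Integrable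
      (fun r : Ω × (Fin n → ℝ) =>
        (∏ j, (r.2 j : ℂ) ^ (-(a : ℂ) + Complex.I * (s j : ℂ))) *
          (K r.1 * f' (dil (fun k => d k r.1) r.2)))
      (μ.prod ((volume : Measure (Fin n → ℝ)).restrict (posOrth n))) := by
    intro s
    rw [integrable_prod_iff (hΦsm s).aestronglyMeasurable]
    constructor
    · refine Filter.Eventually.of_forall fun u => ?_
      have h1 : Integrable
          ((fun y => (∏ j, (y j : ℂ) ^ (-(a : ℂ) + Complex.I * (s j : ℂ))) * f' y) ∘
            dil (fun k => d k u))
          ((volume : Measure (Fin n → ℝ)).restrict (posOrth n)) :=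
        integrable_comp_dil (fun k => hdpos k u) (hG'base s).aestronglyMeasurable (hG'base s)
      have h2 := h1.const_mul
        (K u * ∏ j, (d j u : ℂ) ^ (-(-(a : ℂ) + Complex.I * (s j : ℂ))))
      refine h2.congr ?_
      filter_upwards [ae_restrict_mem measurableSet_posOrth] with x hx
      show (K u * ∏ j, (d j u : ℂ) ^ (-(-(a : ℂ) + Complex.I * (s j : ℂ)))) *
          ((∏ j, ((dil (fun k => d k u) x) j : ℂ) ^ (-(a : ℂ) + Complex.I * (s j : ℂ))) *
            f' (dil (fun k => d k u) x))
        = (∏ j, (x j : ℂ) ^ (-(a : ℂ) + Complex.I * (s j : ℂ))) *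
            (K u * f' (dil (fun k => d k u) x))
      rw [prod_cpow_dil (fun k => hdpos k u) hx]
      exact mul_shuffle _ _ _ _ _ (cpow_prod_cancel (fun k => hdpos k u) _)
    · refine (hint.mul_const
        (∫ y in posOrth n, (∏ j, (y j) ^ (-a)) * ‖f' y‖)).congr
        (Filter.Eventually.of_forall fun u => ?_)
      calc (‖K u‖ * (∏ k, d k u) ^ (-b)) * ∫ y in posOrth n, (∏ j, (y j) ^ (-a)) * ‖f' y‖
          = ‖K u‖ * ((∏ k, d k u) ^ (-b) * ∫ y in posOrth n, (∏ j, (y j) ^ (-a)) * ‖f' y‖) := by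
            ring
        _ = ‖K u‖ * ∫ x in posOrth n, (∏ j, (x j) ^ (-a)) * ‖f' (dil (fun k => d k u) x)‖ := by
            rw [hRV u]
        _ = ∫ x in posOrth n, ‖K u‖ * ((∏ j, (x j) ^ (-a)) * ‖f' (dil (fun k => d k u) x)‖) :=
            (MeasureTheory.integral_const_mul _ _).symm
        _ = ∫ x in posOrth n,
            ‖(∏ j, (x j : ℂ) ^ (-(a : ℂ) + Complex.I * (s j : ℂ))) *
              (K u * f' (dil (fun k => d k u) x))‖ := by
            refine integral_congr_ae ?_
            filter_upwards [ae_restrict_mem measurableSet_posOrth] with x hx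
            rw [norm_mul, norm_mul, hnormP s hx]
            ring
  constructor
  · -- integrability of the weighted operator output
    refine Integrable.mono' ((hΦint 0).integral_norm_prod_right)
      (((measurable_weight (-a)).aestronglyMeasurable).mul
        (((StronglyMeasurable.integral_prod_left
          (f := fun u x => K u * f' (dil (fun k => d k u) x)) hKf'sm)).aestronglyMeasurable.norm)) ?_
    filter_upwards [ae_restrict_mem measurableSet_posOrth] with x hx
    rw [Real.norm_eq_abs, _root_.abs_of_nonneg (mul_nonneg (hwnn hx) (norm_nonneg _))]
    calc (∏ j, (x j) ^ (-a)) * ‖∫ u, K u * f' (dil (fun k => d k u) x) ∂μ‖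
        ≤ (∏ j, (x j) ^ (-a)) * ∫ u, ‖K u * f' (dil (fun k => d k u) x)‖ ∂μ :=
          mul_le_mul_of_nonneg_left (norm_integral_le_integral_norm _) (hwnn hx)
      _ = ∫ u, (∏ j, (x j) ^ (-a)) * ‖K u * f' (dil (fun k => d k u) x)‖ ∂μ :=
          (MeasureTheory.integral_const_mul _ _).symm
      _ = ∫ u, ‖(∏ j, (x j : ℂ) ^ (-(a : ℂ) + Complex.I * (((0 : Fin n → ℝ)) j : ℂ))) *
            (K u * f' (dil (fun k => d k u) x))‖ ∂μ := by
          refine integral_congr_ae (Filter.Eventually.of_forall fun u => ?_)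
          show (∏ j, (x j) ^ (-a)) * ‖K u * f' (dil (fun k => d k u) x)‖
            = ‖(∏ j, (x j : ℂ) ^ (-(a : ℂ) + Complex.I * (((0 : Fin n → ℝ)) j : ℂ))) *
                (K u * f' (dil (fun k => d k u) x))‖
          simp only [norm_mul]
          rw [hnormP 0 hx]
  · -- the Fubini identity
    intro s
    calc ∫ x in posOrth n,
            (∏ j, (x j : ℂ) ^ (-(a : ℂ) + Complex.I * (s j : ℂ))) *
              (∫ u, K u * f' (dil (fun k => d k u) x) ∂μ)
        = ∫ x in posOrth n,
            ∫ u, (∏ j, (x j : ℂ) ^ (-(a : ℂ) + Complex.I * (s j : ℂ))) *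
              (K u * f' (dil (fun k => d k u) x)) ∂μ := by
          refine integral_congr_ae (Filter.Eventually.of_forall fun x => ?_)
          exact (MeasureTheory.integral_const_mul _ _).symm
      _ = ∫ u, (∫ x in posOrth n,
            (∏ j, (x j : ℂ) ^ (-(a : ℂ) + Complex.I * (s j : ℂ))) *
              (K u * f' (dil (fun k => d k u) x))) ∂μ := by
          exact (integral_integral_swap
            (f := fun u x => (∏ j, (x j : ℂ) ^ (-(a : ℂ) + Complex.I * (s j : ℂ))) *
              (K u * f' (dil (fun k => d k u) x))) (hΦint s)).symm
      _ = ∫ u, (K u * ∏ k, (d k u : ℂ) ^ (-(b : ℂ) - Complex.I * (s k : ℂ))) *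
            (∫ y in posOrth n, (∏ j, (y j : ℂ) ^ (-(a : ℂ) + Complex.I * (s j : ℂ))) * f' y) ∂μ := by
          refine integral_congr_ae (Filter.Eventually.of_forall fun u => ?_)
          calc ∫ x in posOrth n,
                (∏ j, (x j : ℂ) ^ (-(a : ℂ) + Complex.I * (s j : ℂ))) *
                  (K u * f' (dil (fun k => d k u) x))
              = ∫ x in posOrth n, K u *
                  ((∏ j, (x j : ℂ) ^ (-(a : ℂ) + Complex.I * (s j : ℂ))) *
                    f' (dil (fun k => d k u) x)) := by
                refine integral_congr_ae (Filter.Eventually.of_forall fun x => ?_)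
                ring
            _ = K u * ∫ x in posOrth n,
                  (∏ j, (x j : ℂ) ^ (-(a : ℂ) + Complex.I * (s j : ℂ))) *
                    f' (dil (fun k => d k u) x) := MeasureTheory.integral_const_mul _ _
            _ = (K u * ∏ k, (d k u : ℂ) ^ (-(b : ℂ) - Complex.I * (s k : ℂ))) *
                  (∫ y in posOrth n,
                    (∏ j, (y j : ℂ) ^ (-(a : ℂ) + Complex.I * (s j : ℂ))) * f' y) := by
                rw [hCV s u]; ring
      _ = (∫ u, K u * ∏ k, ((d k u : ℂ) ^ (-(b : ℂ) - Complex.I * (s k : ℂ))) ∂μ) *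
            ∫ x in posOrth n, (∏ j, (x j : ℂ) ^ (-(a : ℂ) + Complex.I * (s j : ℂ))) * f' x :=
          MeasureTheory.integral_mul_const _ _


lemma core {Ω : Type*} [MeasurableSpace Ω] (μ : Measure Ω) [SigmaFinite μ]
    (p q : ℝ≥0∞) [Fact (1 ≤ p)] [Fact (1 ≤ q)]
    (hp2 : p ≤ 2) (hpq : 1 / p + 1 / q = 1)
    (K : Ω → ℂ) (hK : Measurable K)
    (d : Fin n → Ω → ℝ) (hd : ∀ k, Measurable (d k)) (hdpos : ∀ k u, 0 < d k u)
    (hint : Integrable (fun u => ‖K u‖ * (∏ k, d k u) ^ (-(1 / p.toReal))) μ)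
    (M : Lp ℂ p ((volume : Measure (Fin n → ℝ)).restrict (posOrth n)) →L[ℂ]
         Lp ℂ q (volume : Measure (Fin n → ℝ)))
    (hM : ∀ f : Lp ℂ p ((volume : Measure (Fin n → ℝ)).restrict (posOrth n)),
      Integrable (fun x : Fin n → ℝ => ((∏ j, (x j : ℝ) ^ (-(1 / q.toReal)) : ℝ)) * ‖f x‖)
          ((volume : Measure (Fin n → ℝ)).restrict (posOrth n)) →
      ∀ᵐ s : Fin n → ℝ, (M f : (Fin n → ℝ) → ℂ) s
        = (((2 * π) ^ (-(n : ℝ) / 2) : ℝ) : ℂ) *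
          ∫ x in posOrth n,
            (∏ j, (x j : ℂ) ^ ((-(1 / q.toReal) : ℂ) + Complex.I * (s j : ℂ))) * f x)
    (Kop : Lp ℂ p ((volume : Measure (Fin n → ℝ)).restrict (posOrth n)) →L[ℂ]
           Lp ℂ p ((volume : Measure (Fin n → ℝ)).restrict (posOrth n)))
    (hKop : ∀ f : Lp ℂ p ((volume : Measure (Fin n → ℝ)).restrict (posOrth n)),
      ∀ᵐ x : Fin n → ℝ ∂(volume : Measure (Fin n → ℝ)).restrict (posOrth n),
        (Kop f : (Fin n → ℝ) → ℂ) x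
          = ∫ u, K u * f ((Matrix.diagonal fun k => d k u).mulVec x) ∂μ)
    (f : Lp ℂ p ((volume : Measure (Fin n → ℝ)).restrict (posOrth n)))
    (f' : (Fin n → ℝ) → ℂ) (hf's : StronglyMeasurable f')
    (hff' : (f : (Fin n → ℝ) → ℂ) =ᵐ[(volume : Measure (Fin n → ℝ)).restrict (posOrth n)] f')
    (H1 : Integrable (fun x : Fin n → ℝ => (∏ j, (x j : ℝ) ^ (-(1 / q.toReal))) * ‖f' x‖)
      ((volume : Measure (Fin n → ℝ)).restrict (posOrth n))) :
    ∀ᵐ s : Fin n → ℝ, (M (Kop f) : (Fin n → ℝ) → ℂ) s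
      = (∫ u, K u * ∏ k, ((d k u : ℂ) ^ ((-(1 / p.toReal) : ℂ) - Complex.I * (s k : ℂ))) ∂μ)
          * (M f : (Fin n → ℝ) → ℂ) s := by
  classical
  obtain ⟨hab, hb0, hb1⟩ := exponent_facts p q hp2 hpq
  have hmv : ∀ (u : Ω) (x : Fin n → ℝ),
      (Matrix.diagonal fun k => d k u).mulVec x = dil (fun k => d k u) x := fun u x =>
    funext fun j => by simp [dil, Matrix.mulVec_diagonal]
  obtain ⟨hWint, hid⟩ :=
    fubini_main μ K hK d hd hdpos (1 / q.toReal) (1 / p.toReal) hab hint f' hf's H1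
  -- a.e. representation of `Kop f`
  have hrep : (Kop f : (Fin n → ℝ) → ℂ)
      =ᵐ[(volume : Measure (Fin n → ℝ)).restrict (posOrth n)]
      fun x => ∫ u, K u * f' (dil (fun k => d k u) x) ∂μ := by
    have hnull : (volume : Measure (Fin n → ℝ)).restrict (posOrth n)
        {x | ¬ (f : (Fin n → ℝ) → ℂ) x = f' x} = 0 := ae_iff.mp hff'
    obtain ⟨N, hsub, hNm, hN0⟩ := exists_measurable_superset_of_null hnull
    have hpre0 : ∀ u : Ω, (volume : Measure (Fin n → ℝ)).restrict (posOrth n)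
        (dil (fun k => d k u) ⁻¹' N) = 0 := by
      intro u
      have h := Measure.map_apply
        (μ := (volume : Measure (Fin n → ℝ)).restrict (posOrth n))
        (measurable_dil (fun k => d k u)) hNm
      rw [map_dil (fun k => hdpos k u)] at h
      rw [← h]
      simp [hN0]
    have hTm2 : Measurable fun r : (Fin n → ℝ) × Ω => dil (fun k => d k r.2) r.1 :=
      measurable_pi_lambda _ fun j =>
        ((hd j).comp measurable_snd).mul ((measurable_pi_apply j).comp measurable_fst)
    have hSm : MeasurableSet {r : (Fin n → ℝ) × Ω | dil (fun k => d k r.2) r.1 ∈ N} :=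
      hTm2 hNm
    have hS0 : ((((volume : Measure (Fin n → ℝ)).restrict (posOrth n))).prod μ)
        {r : (Fin n → ℝ) × Ω | dil (fun k => d k r.2) r.1 ∈ N} = 0 := by
      rw [Measure.prod_apply_symm hSm]
      have hz : ∀ u : Ω, ((volume : Measure (Fin n → ℝ)).restrict (posOrth n))
          ((fun x : Fin n → ℝ => (x, u)) ⁻¹'
            {r : (Fin n → ℝ) × Ω | dil (fun k => d k r.2) r.1 ∈ N}) = 0 := fun u => hpre0 u
      rw [lintegral_congr hz]
      simp
    have haeS : ∀ᵐ r : (Fin n → ℝ) × Ω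
        ∂((((volume : Measure (Fin n → ℝ)).restrict (posOrth n))).prod μ),
        dil (fun k => d k r.2) r.1 ∉ N := by
      rw [ae_iff]
      simpa [Classical.not_not] using hS0
    have hae2 := Measure.ae_ae_of_ae_prod haeS
    filter_upwards [hKop f, hae2] with x h1 h2
    rw [h1]
    refine integral_congr_ae ?_
    filter_upwards [h2] with u hu
    rw [hmv u x]
    by_cases hcase : (f : (Fin n → ℝ) → ℂ) (dil (fun k => d k u) x)
        = f' (dil (fun k => d k u) x)
    · rw [hcase]
    · exact absurd (hsub hcase) hu
  -- integrability of the weight times `Kop f`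
  have hWKop : Integrable (fun x : Fin n → ℝ =>
      (∏ j, (x j : ℝ) ^ (-(1 / q.toReal))) * ‖(Kop f : (Fin n → ℝ) → ℂ) x‖)
      ((volume : Measure (Fin n → ℝ)).restrict (posOrth n)) := by
    refine hWint.congr ?_
    filter_upwards [hrep] with x hx
    rw [hx]
  have hWf : Integrable (fun x : Fin n → ℝ =>
      (∏ j, (x j : ℝ) ^ (-(1 / q.toReal))) * ‖(f : (Fin n → ℝ) → ℂ) x‖)
      ((volume : Measure (Fin n → ℝ)).restrict (posOrth n)) := by
    refine H1.congr ?_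
    filter_upwards [hff'] with x hx
    rw [hx]
  have hMf := hM f hWf
  have hMKf := hM (Kop f) hWKop
  have hexpq : ∀ (x : ℝ) (t : ℂ),
      (x : ℂ) ^ ((-(1 / q.toReal) : ℂ) + Complex.I * t)
        = (x : ℂ) ^ (-((1 / q.toReal : ℝ) : ℂ) + Complex.I * t) := by
    intro x t
    congr 2
    push_cast
    ring
  have hexpp : ∀ (x : ℝ) (t : ℂ),
      (x : ℂ) ^ ((-(1 / p.toReal) : ℂ) - Complex.I * t)
        = (x : ℂ) ^ (-((1 / p.toReal : ℝ) : ℂ) - Complex.I * t) := by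
    intro x t
    congr 2
    push_cast
    ring
  filter_upwards [hMf, hMKf] with s h1 h2
  rw [h2, h1]
  simp only [hexpq, hexpp]
  have e1 : ∫ x in posOrth n,
      (∏ j, (x j : ℂ) ^ (-((1 / q.toReal : ℝ) : ℂ) + Complex.I * (s j : ℂ))) *
        (Kop f : (Fin n → ℝ) → ℂ) x
      = ∫ x in posOrth n,
      (∏ j, (x j : ℂ) ^ (-((1 / q.toReal : ℝ) : ℂ) + Complex.I * (s j : ℂ))) *
        (∫ u, K u * f' (dil (fun k => d k u) x) ∂μ) := by
    refine integral_congr_ae ?_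
    filter_upwards [hrep] with x hx
    rw [hx]
  have e2 : ∫ x in posOrth n,
      (∏ j, (x j : ℂ) ^ (-((1 / q.toReal : ℝ) : ℂ) + Complex.I * (s j : ℂ))) *
        (f : (Fin n → ℝ) → ℂ) x
      = ∫ x in posOrth n,
      (∏ j, (x j : ℂ) ^ (-((1 / q.toReal : ℝ) : ℂ) + Complex.I * (s j : ℂ))) * f' x := by
    refine integral_congr_ae ?_
    filter_upwards [hff'] with x hx
    rw [hx]
  rw [e1, e2, hid s]
  ring

lemma approx (p : ℝ≥0∞) [Fact (1 ≤ p)] (hp0 : p ≠ 0) (hptop : p ≠ ∞)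
    (a : ℝ) (ha0 : 0 ≤ a) (ha1 : a < 1)
    (f : Lp ℂ p ((volume : Measure (Fin n → ℝ)).restrict (posOrth n))) :
    ∃ F : ℕ → Lp ℂ p ((volume : Measure (Fin n → ℝ)).restrict (posOrth n)),
      Tendsto F atTop (𝓝 f) ∧
      ∀ m : ℕ, ∃ g : (Fin n → ℝ) → ℂ, StronglyMeasurable g ∧
        ((F m : (Fin n → ℝ) → ℂ)
          =ᵐ[(volume : Measure (Fin n → ℝ)).restrict (posOrth n)] g) ∧
        Integrable (fun x : Fin n → ℝ => (∏ j, (x j) ^ (-a)) * ‖g x‖)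
          ((volume : Measure (Fin n → ℝ)).restrict (posOrth n)) := by
  classical
  have hmem : MemLp (f : (Fin n → ℝ) → ℂ) p
      ((volume : Measure (Fin n → ℝ)).restrict (posOrth n)) := Lp.memLp f
  have haesm := Lp.aestronglyMeasurable f
  set f' : (Fin n → ℝ) → ℂ := haesm.mk (f : (Fin n → ℝ) → ℂ) with hf'def
  have hf's : StronglyMeasurable f' := haesm.stronglyMeasurable_mk
  have hff' : (f : (Fin n → ℝ) → ℂ)
      =ᵐ[(volume : Measure (Fin n → ℝ)).restrict (posOrth n)] f' := haesm.ae_eq_mk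
  have hmem' : MemLp f' p ((volume : Measure (Fin n → ℝ)).restrict (posOrth n)) :=
    hmem.ae_eq hff'
  -- truncation sets
  set A : ℕ → Set (Fin n → ℝ) :=
    fun m => {x | ‖f' x‖ ≤ (m : ℝ)} ∩ {x | ∀ j, x j ≤ (m : ℝ)} with hA
  have hAm : ∀ m, MeasurableSet (A m) := by
    intro m
    refine MeasurableSet.inter ?_ ?_
    · exact measurableSet_le hf's.norm.measurable measurable_const
    · have : {x : Fin n → ℝ | ∀ j, x j ≤ (m : ℝ)} = ⋂ j, {x | x j ≤ (m : ℝ)} := by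
        ext x; simp [Set.mem_iInter]
      rw [this]
      exact MeasurableSet.iInter fun j => measurableSet_le (measurable_pi_apply j) measurable_const
  set g : ℕ → (Fin n → ℝ) → ℂ := fun m => (A m).indicator f' with hg
  have hgsm : ∀ m, StronglyMeasurable (g m) := fun m => hf's.indicator (hAm m)
  have hgmem : ∀ m, MemLp (g m) p ((volume : Measure (Fin n → ℝ)).restrict (posOrth n)) :=
    fun m => hmem'.indicator (hAm m)
  refine ⟨fun m => (hgmem m).toLp (g m), ?_, ?_⟩
  · -- convergence in Lp
    rw [Lp.tendsto_Lp_iff_tendsto_eLpNorm']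
    have hcongr : ∀ m : ℕ,
        eLpNorm ((((hgmem m).toLp (g m)) : (Fin n → ℝ) → ℂ) - (f : (Fin n → ℝ) → ℂ)) p
          ((volume : Measure (Fin n → ℝ)).restrict (posOrth n))
        = eLpNorm (g m - f') p ((volume : Measure (Fin n → ℝ)).restrict (posOrth n)) :=
      fun m => eLpNorm_congr_ae (((hgmem m).coeFn_toLp).sub hff')
    have heq : (fun m : ℕ =>
        eLpNorm ((((hgmem m).toLp (g m)) : (Fin n → ℝ) → ℂ) - (f : (Fin n → ℝ) → ℂ)) p
          ((volume : Measure (Fin n → ℝ)).restrict (posOrth n)))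
        = fun m : ℕ => (∫⁻ x, (‖g m x - f' x‖₊ : ℝ≥0∞) ^ p.toReal
            ∂((volume : Measure (Fin n → ℝ)).restrict (posOrth n))) ^ (1 / p.toReal) :=
      funext fun m => by
        rw [hcongr m, eLpNorm_eq_lintegral_rpow_enorm_toReal hp0 hptop]
        rfl
    rw [heq]
    have hptR : 0 < p.toReal := ENNReal.toReal_pos hp0 hptop
    have hfin : ∫⁻ x, ((2 : ℝ≥0∞) * (‖f' x‖₊ : ℝ≥0∞)) ^ p.toReal
        ∂((volume : Measure (Fin n → ℝ)).restrict (posOrth n)) ≠ ∞ := by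
      have hf'fin : ∫⁻ x, (‖f' x‖₊ : ℝ≥0∞) ^ p.toReal
          ∂((volume : Measure (Fin n → ℝ)).restrict (posOrth n)) < ∞ := by
        have h2 := hmem'.2
        rw [eLpNorm_eq_lintegral_rpow_enorm_toReal hp0 hptop] at h2
        exact (ENNReal.rpow_lt_top_iff_of_pos (by positivity)).mp h2
      calc ∫⁻ x, ((2 : ℝ≥0∞) * (‖f' x‖₊ : ℝ≥0∞)) ^ p.toReal
            ∂((volume : Measure (Fin n → ℝ)).restrict (posOrth n))
          = ∫⁻ x, (2 : ℝ≥0∞) ^ p.toReal * (‖f' x‖₊ : ℝ≥0∞) ^ p.toReal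
            ∂((volume : Measure (Fin n → ℝ)).restrict (posOrth n)) := by
            refine lintegral_congr fun x => ?_
            rw [ENNReal.mul_rpow_of_nonneg _ _ hptR.le]
        _ = (2 : ℝ≥0∞) ^ p.toReal * ∫⁻ x, (‖f' x‖₊ : ℝ≥0∞) ^ p.toReal
            ∂((volume : Measure (Fin n → ℝ)).restrict (posOrth n)) := by
            rw [lintegral_const_mul _ (hf's.measurable.nnnorm.coe_nnreal_ennreal.pow_const _)]
        _ ≠ ∞ := by
            exact ENNReal.mul_ne_top (ENNReal.rpow_ne_top_of_nonneg hptR.le (by simp)) hf'fin.ne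
    have hlim : Tendsto (fun m : ℕ => ∫⁻ x, (‖g m x - f' x‖₊ : ℝ≥0∞) ^ p.toReal
        ∂((volume : Measure (Fin n → ℝ)).restrict (posOrth n))) atTop (𝓝 0) := by
      have h0 : (0 : ℝ≥0∞) = ∫⁻ _x, (0 : ℝ≥0∞)
          ∂((volume : Measure (Fin n → ℝ)).restrict (posOrth n)) := by simp
      rw [h0]
      refine tendsto_lintegral_of_dominated_convergence
        (fun x => ((2 : ℝ≥0∞) * (‖f' x‖₊ : ℝ≥0∞)) ^ p.toReal) ?_ ?_ hfin ?_
      · intro m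
        exact (((hgsm m).sub hf's).measurable.nnnorm.coe_nnreal_ennreal).pow_const _
      · intro m
        refine Filter.Eventually.of_forall fun x => ?_
        have hnorm : ‖g m x - f' x‖ ≤ 2 * ‖f' x‖ := by
          have h1 : ‖g m x‖ ≤ ‖f' x‖ := by
            by_cases hx : x ∈ A m
            · simp [hg, Set.indicator_of_mem hx]
            · simp [hg, Set.indicator_of_notMem hx]
          calc ‖g m x - f' x‖ ≤ ‖g m x‖ + ‖f' x‖ := norm_sub_le _ _
            _ ≤ 2 * ‖f' x‖ := by linarith
        refine ENNReal.rpow_le_rpow ?_ hptR.le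
        have : (‖g m x - f' x‖₊ : ℝ≥0∞) ≤ ((2 * ‖f' x‖₊ : ℝ≥0) : ℝ≥0∞) := by
          exact_mod_cast ENNReal.coe_le_coe.mpr (by
            rw [← NNReal.coe_le_coe]
            push_cast
            simpa using hnorm)
        simpa [ENNReal.coe_mul] using this
      · refine Filter.Eventually.of_forall fun x => ?_
        obtain ⟨Mx, hMx⟩ := exists_nat_ge (max ‖f' x‖ (∑ j, |x j|))
        have hxev : ∀ᶠ m : ℕ in atTop, (‖g m x - f' x‖₊ : ℝ≥0∞) ^ p.toReal = 0 := by
          refine Filter.eventually_atTop.2 ⟨Mx, fun m hm => ?_⟩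
          have hmx : x ∈ A m := by
            constructor
            · exact le_trans (le_trans (le_max_left _ _) hMx) (by exact_mod_cast hm)
            · intro j
              have h1 : x j ≤ ∑ j', |x j'| := by
                calc x j ≤ |x j| := le_abs_self _
                  _ ≤ ∑ j', |x j'| :=
                    Finset.single_le_sum (fun j' _ => abs_nonneg (x j')) (Finset.mem_univ j)
              exact le_trans (le_trans h1 (le_trans (le_max_right _ _) hMx))
                (by exact_mod_cast hm)
          simp [hg, Set.indicator_of_mem hmx, ENNReal.zero_rpow_of_pos hptR]
        refine Tendsto.congr' ?_ tendsto_const_nhds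
        filter_upwards [hxev] with m hm
        exact hm.symm
    have hcont : Tendsto (fun z : ℝ≥0∞ => z ^ (1 / p.toReal)) (𝓝 0) (𝓝 0) := by
      have := (ENNReal.continuous_rpow_const (y := 1 / p.toReal)).tendsto 0
      rwa [ENNReal.zero_rpow_of_pos (by positivity)] at this
    exact hcont.comp hlim
  · -- each truncation is nice
    intro m
    refine ⟨g m, hgsm m, (hgmem m).coeFn_toLp, ?_⟩
    set h1d : ℝ → ℝ := Set.indicator (Set.Ioc (0 : ℝ) (m : ℝ)) (fun t => t ^ (-a)) with hh1d
    have hh1int : Integrable h1d (volume : Measure ℝ) := by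
      rw [hh1d, integrable_indicator_iff measurableSet_Ioc]
      have h := intervalIntegral.intervalIntegrable_rpow' (a := 0) (b := (m : ℝ))
        (show (-1 : ℝ) < -a by linarith)
      exact (intervalIntegrable_iff_integrableOn_Ioc_of_le (by positivity)).mp h
    have hprod : Integrable (fun x : Fin n → ℝ => ∏ j, h1d (x j))
        (volume : Measure (Fin n → ℝ)) :=
      Integrable.fintype_prod (f := fun _ : Fin n => h1d) fun _ => hh1int
    have hdom : Integrable (fun x : Fin n → ℝ => (m : ℝ) * ∏ j, h1d (x j))
        ((volume : Measure (Fin n → ℝ)).restrict (posOrth n)) :=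
      (hprod.const_mul _).restrict
    refine Integrable.mono' hdom
      (((measurable_weight (-a)).aestronglyMeasurable).mul
        ((hgsm m).norm.aestronglyMeasurable)) ?_
    filter_upwards [ae_restrict_mem measurableSet_posOrth] with x hx
    have hwnn : 0 ≤ ∏ j, (x j) ^ (-a) :=
      Finset.prod_nonneg fun j _ => Real.rpow_nonneg (hx j).le _
    rw [Real.norm_eq_abs, _root_.abs_of_nonneg (mul_nonneg hwnn (norm_nonneg _))]
    by_cases hxA : x ∈ A m
    · have hbox : ∀ j, x j ∈ Set.Ioc (0 : ℝ) (m : ℝ) := fun j => ⟨hx j, hxA.2 j⟩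
      have hpr : ∏ j, h1d (x j) = ∏ j, (x j) ^ (-a) :=
        Finset.prod_congr rfl fun j _ => by rw [hh1d, Set.indicator_of_mem (hbox j)]
      rw [hpr]
      have : ‖g m x‖ = ‖f' x‖ := by rw [hg]; simp [Set.indicator_of_mem hxA]
      rw [this]
      calc (∏ j, (x j) ^ (-a)) * ‖f' x‖ ≤ (∏ j, (x j) ^ (-a)) * (m : ℝ) :=
          mul_le_mul_of_nonneg_left hxA.1 hwnn
        _ = (m : ℝ) * ∏ j, (x j) ^ (-a) := mul_comm _ _
    · have : g m x = 0 := by rw [hg]; simp [Set.indicator_of_notMem hxA]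
      rw [this]
      simp only [norm_zero, mul_zero]
      refine mul_nonneg (Nat.cast_nonneg m) (Finset.prod_nonneg fun j _ => ?_)
      exact Set.indicator_nonneg (fun t ht => Real.rpow_nonneg ht.1.le _) _

end MellinSymbolAux


set_option maxHeartbeats 2000000 in
/-- **The Mellin transform diagonalizes Hausdorff operators with positive diagonal
matrices.** With `(K f)(x) = ∫ K u * f (D(u) x) dμ`, `D(u) = diag (d k u)`, `d k u > 0`,
one has `(M (K f))(s) = φ(s) (M f)(s)` a.e. for every `f ∈ L^p(U)`, where
`φ(s) = ∫ K u * ∏_k (d k u)^{-1/p - i s_k} dμ` is bounded and continuous. -/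
theorem mellin_symbol_property
    {Ω : Type*} [MeasurableSpace Ω] (μ : Measure Ω) [SigmaFinite μ]
    (n : ℕ) (p q : ℝ≥0∞) [Fact (1 ≤ p)] [Fact (1 ≤ q)]
    (hp2 : p ≤ 2) (hpq : 1 / p + 1 / q = 1)
    (K : Ω → ℂ) (hK : Measurable K)
    (d : Fin n → Ω → ℝ) (hd : ∀ k, Measurable (d k)) (hdpos : ∀ k u, 0 < d k u)
    (hint : Integrable (fun u => ‖K u‖ * (∏ k, d k u) ^ (-(1 / p.toReal))) μ)
    (M : Lp ℂ p ((volume : Measure (Fin n → ℝ)).restrict {x | ∀ j, 0 < x j}) →L[ℂ]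
         Lp ℂ q (volume : Measure (Fin n → ℝ)))
    (hM : ∀ f : Lp ℂ p ((volume : Measure (Fin n → ℝ)).restrict {x | ∀ j, 0 < x j}),
      Integrable (fun x : Fin n → ℝ => ((∏ j, (x j : ℝ) ^ (-(1 / q.toReal)) : ℝ)) * ‖f x‖)
          ((volume : Measure (Fin n → ℝ)).restrict {x | ∀ j, 0 < x j}) →
      ∀ᵐ s : Fin n → ℝ, (M f : (Fin n → ℝ) → ℂ) s
        = (((2 * π) ^ (-(n : ℝ) / 2) : ℝ) : ℂ) *
          ∫ x in {x : Fin n → ℝ | ∀ j, 0 < x j},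
            (∏ j, (x j : ℂ) ^ ((-(1 / q.toReal) : ℂ) + Complex.I * (s j : ℂ))) * f x)
    (Kop : Lp ℂ p ((volume : Measure (Fin n → ℝ)).restrict {x | ∀ j, 0 < x j}) →L[ℂ]
           Lp ℂ p ((volume : Measure (Fin n → ℝ)).restrict {x | ∀ j, 0 < x j}))
    (hKop : ∀ f : Lp ℂ p ((volume : Measure (Fin n → ℝ)).restrict {x | ∀ j, 0 < x j}),
      ∀ᵐ x : Fin n → ℝ ∂(volume : Measure (Fin n → ℝ)).restrict {x | ∀ j, 0 < x j},
        (Kop f : (Fin n → ℝ) → ℂ) x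
          = ∫ u, K u * f ((Matrix.diagonal fun k => d k u).mulVec x) ∂μ) :
    (Continuous fun s : Fin n → ℝ =>
      ∫ u, K u * ∏ k, ((d k u : ℂ) ^ ((-(1 / p.toReal) : ℂ) - Complex.I * (s k : ℂ))) ∂μ) ∧
    (∃ Cb : ℝ, ∀ s : Fin n → ℝ,
      ‖∫ u, K u * ∏ k, ((d k u : ℂ) ^ ((-(1 / p.toReal) : ℂ) - Complex.I * (s k : ℂ))) ∂μ‖ ≤ Cb) ∧
    ∀ f : Lp ℂ p ((volume : Measure (Fin n → ℝ)).restrict {x | ∀ j, 0 < x j}),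
      ∀ᵐ s : Fin n → ℝ, (M (Kop f) : (Fin n → ℝ) → ℂ) s
        = (∫ u, K u * ∏ k, ((d k u : ℂ) ^ ((-(1 / p.toReal) : ℂ) - Complex.I * (s k : ℂ))) ∂μ)
            * (M f : (Fin n → ℝ) → ℂ) s := by
  classical
  obtain ⟨hab, hb0, hb1⟩ := MellinSymbolAux.exponent_facts p q hp2 hpq
  have hp0 : p ≠ 0 := by
    intro h
    have := (Fact.out : (1 : ℝ≥0∞) ≤ p)
    rw [h] at this
    exact absurd this (by simp)
  have hptop : p ≠ ∞ := (hp2.trans_lt (by norm_num : (2 : ℝ≥0∞) < ∞)).ne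
  have hexpp : ∀ (x : ℝ) (t : ℂ),
      (x : ℂ) ^ ((-(1 / p.toReal) : ℂ) - Complex.I * t)
        = (x : ℂ) ^ (-((1 / p.toReal : ℝ) : ℂ) - Complex.I * t) := by
    intro x t
    congr 2
    push_cast
    ring
  have hsymb_norm : ∀ (s : Fin n → ℝ) (u : Ω),
      ‖K u * ∏ k, ((d k u : ℂ) ^ ((-(1 / p.toReal) : ℂ) - Complex.I * (s k : ℂ)))‖
        = ‖K u‖ * (∏ k, d k u) ^ (-(1 / p.toReal)) := by
    intro s u
    rw [norm_mul]
    congr 1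
    calc ‖∏ k, (d k u : ℂ) ^ ((-(1 / p.toReal) : ℂ) - Complex.I * (s k : ℂ))‖
        = ‖∏ k, (d k u : ℂ) ^ (-((1 / p.toReal : ℝ) : ℂ) - Complex.I * (s k : ℂ))‖ := by
          congr 1
          exact Finset.prod_congr rfl fun k _ => hexpp _ _
      _ = (∏ k, d k u) ^ (-(1 / p.toReal)) :=
          MellinSymbolAux.norm_symbol_term (fun k => hdpos k u) _ s
  refine ⟨?_, ⟨∫ u, ‖K u‖ * (∏ k, d k u) ^ (-(1 / p.toReal)) ∂μ, ?_⟩, ?_⟩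
  · -- continuity of the symbol
    refine MeasureTheory.continuous_of_dominated ?_ ?_ hint ?_
    · intro s
      refine (hK.mul (Finset.measurable_prod _ fun k _ => ?_)).aestronglyMeasurable
      exact (Complex.measurable_ofReal.comp (hd k)).pow_const _
    · intro s
      exact Filter.Eventually.of_forall fun u => le_of_eq (hsymb_norm s u)
    · refine Filter.Eventually.of_forall fun u => ?_
      refine continuous_const.mul (continuous_finset_prod _ fun k _ => ?_)
      refine Continuous.const_cpow ?_ (Or.inl (Complex.ofReal_ne_zero.mpr (hdpos k u).ne'))
      exact continuous_const.sub
        (continuous_const.mul (Complex.continuous_ofReal.comp (continuous_apply k)))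
  · -- boundedness of the symbol
    intro s
    exact norm_integral_le_of_norm_le hint
      (Filter.Eventually.of_forall fun u => le_of_eq (hsymb_norm s u))
  · -- the symbol identity
    intro f
    have ha0 : 0 ≤ 1 / q.toReal := by positivity
    have ha1 : 1 / q.toReal < 1 := by rw [hab]; linarith
    obtain ⟨F, hFtend, hFnice⟩ :=
      MellinSymbolAux.approx (n := n) p hp0 hptop (1 / q.toReal) ha0 ha1 f
    have hseq : ∀ m : ℕ, ∀ᵐ s : Fin n → ℝ, (M (Kop (F m)) : (Fin n → ℝ) → ℂ) s
        = (∫ u, K u * ∏ k, ((d k u : ℂ) ^ ((-(1 / p.toReal) : ℂ) - Complex.I * (s k : ℂ))) ∂μ)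
            * (M (F m) : (Fin n → ℝ) → ℂ) s := by
      intro m
      obtain ⟨g, hgsm, hgae, hgint⟩ := hFnice m
      exact MellinSymbolAux.core μ p q hp2 hpq K hK d hd hdpos hint M hM Kop hKop
        (F m) g hgsm hgae hgint
    have hall := ae_all_iff.mpr hseq
    have hKtend : Tendsto (fun m => M (Kop (F m))) atTop (𝓝 (M (Kop f))) :=
      (M.continuous.tendsto _).comp ((Kop.continuous.tendsto _).comp hFtend)
    have hMtend : Tendsto (fun m => M (F m)) atTop (𝓝 (M f)) :=
      (M.continuous.tendsto _).comp hFtend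
    obtain ⟨n1, hn1mono, hn1ae⟩ :=
      (MeasureTheory.tendstoInMeasure_of_tendsto_Lp hKtend).exists_seq_tendsto_ae
    have hMsub : Tendsto (fun i => M (F (n1 i))) atTop (𝓝 (M f)) :=
      hMtend.comp hn1mono.tendsto_atTop
    obtain ⟨n2, hn2mono, hn2ae⟩ :=
      (MeasureTheory.tendstoInMeasure_of_tendsto_Lp hMsub).exists_seq_tendsto_ae
    filter_upwards [hall, hn1ae, hn2ae] with s hs h1s h2s
    have hA : Tendsto (fun i => (M (Kop (F (n1 (n2 i)))) : (Fin n → ℝ) → ℂ) s) atTop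
        (𝓝 ((M (Kop f) : (Fin n → ℝ) → ℂ) s)) := h1s.comp hn2mono.tendsto_atTop
    have hB : Tendsto (fun i =>
        (∫ u, K u * ∏ k, ((d k u : ℂ) ^ ((-(1 / p.toReal) : ℂ) - Complex.I * (s k : ℂ))) ∂μ)
          * (M (F (n1 (n2 i))) : (Fin n → ℝ) → ℂ) s) atTop
        (𝓝 ((∫ u, K u * ∏ k, ((d k u : ℂ) ^ ((-(1 / p.toReal) : ℂ) - Complex.I * (s k : ℂ))) ∂μ)
          * (M f : (Fin n → ℝ) → ℂ) s)) := h2s.const_mul _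
    have heq : (fun i => (M (Kop (F (n1 (n2 i)))) : (Fin n → ℝ) → ℂ) s)
        = fun i => (∫ u, K u * ∏ k,
            ((d k u : ℂ) ^ ((-(1 / p.toReal) : ℂ) - Complex.I * (s k : ℂ))) ∂μ)
          * (M (F (n1 (n2 i))) : (Fin n → ℝ) → ℂ) s := funext fun i => hs (n1 (n2 i))
    rw [heq] at hA
    exact tendsto_nhds_unique hA hB
end
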